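/- arXiv:1405.7923 — 5 statements merged into one kernel-verified Lean document; each statement's English description precedes it below -/
import Mathlib

section
/- Let L be an image-finite labelled transition system and let B, B' be sets of pairs of states of L such that B ⊐ B' (B' is a minimal expansion for B) and LeastEqLev(B) < ω. Then LeastEqLev(B) > LeastEqLev(B'). -/
/-- A labelled transition system with states `S` and actions `A`. -/
structure LTS (S : Type*) (A : Type*) where
  Tr : A → S → S → Prop

namespace LTS

variable {S A : Type*}

/-- An LTS is image-finite if each state has finitely many `a`-successors. -/
def ImageFinite (L : LTS S A) : Prop := ∀ a s, {t | L.Tr a s t}.Finite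

/-- A set `B` of pairs of states covers the pair `p`. -/
def Covers (L : LTS S A) (B : Set (S × S)) (p : S × S) : Prop :=
  (∀ a s', L.Tr a p.1 s' → ∃ t', L.Tr a p.2 t' ∧ (s', t') ∈ B) ∧
  (∀ a t', L.Tr a p.2 t' → ∃ s', L.Tr a p.1 s' ∧ (s', t') ∈ B)

/-- `B'` covers the set `B` (i.e., covers each of its pairs). -/
def CoversSet (L : LTS S A) (B' B : Set (S × S)) : Prop := ∀ p ∈ B, L.Covers B' p

/-- `B ⊐ B'`: `B'` is a minimal expansion for `B`. -/
def MinExp (L : LTS S A) (B B' : Set (S × S)) : Prop :=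
  L.CoversSet B' B ∧ ∀ B'', B'' ⊂ B' → ¬ L.CoversSet B'' B

/-- The stratified equivalences: `∼_0` is everything, `∼_{k+1}` are the pairs covered by `∼_k`. -/
def simN (L : LTS S A) : ℕ → Set (S × S)
  | 0 => Set.univ
  | k + 1 => {p | L.Covers (L.simN k) p}

/-- `eqlevel(s,t) ∈ ℕ ∪ {ω}`: the largest `e` with `s ∼_e t` (`⊤` plays the role of `ω`,
meaning `s ∼_k t` for all `k ∈ ℕ`). -/
noncomputable def eqlevel (L : LTS S A) (s t : S) : ℕ∞ :=
  sSup {e : ℕ∞ | ∃ k : ℕ, e = (k : ℕ∞) ∧ (s, t) ∈ L.simN k}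

/-- `LeastEqLev(B) = min {eqlevel(s,t) | (s,t) ∈ B}`, with `min ∅ = ω = ⊤`. -/
noncomputable def leastEqLev (L : LTS S A) (B : Set (S × S)) : ℕ∞ :=
  sInf {e : ℕ∞ | ∃ p ∈ B, e = L.eqlevel p.1 p.2}

/-- `B` is a bisimulation if it covers itself. -/
def Bisimulation (L : LTS S A) (B : Set (S × S)) : Prop := L.CoversSet B B

/-- `s ∼ t`: some bisimulation contains `(s,t)`. -/
def Bisim (L : LTS S A) (s t : S) : Prop := ∃ B, L.Bisimulation B ∧ (s, t) ∈ B

lemma covers_mono (L : LTS S A) {B C : Set (S × S)} (h : B ⊆ C) {p : S × S}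
    (hp : L.Covers B p) : L.Covers C p := by
  obtain ⟨h1, h2⟩ := hp
  exact ⟨fun a s' hs => (h1 a s' hs).imp fun t' ⟨ht, hb⟩ => ⟨ht, h hb⟩,
         fun a t' ht => (h2 a t' ht).imp fun s' ⟨hs, hb⟩ => ⟨hs, h hb⟩⟩

lemma simN_succ_subset (L : LTS S A) : ∀ k, L.simN (k + 1) ⊆ L.simN k
  | 0 => fun p _ => Set.mem_univ p
  | k + 1 => fun p hp => L.covers_mono (simN_succ_subset L k) hp

lemma simN_antitone (L : LTS S A) : ∀ {j k : ℕ}, j ≤ k → L.simN k ⊆ L.simN j := by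
  intro j k h
  induction k with
  | zero => rw [Nat.le_zero.mp h]
  | succ k ih =>
    rcases Nat.lt_or_ge j (k + 1) with h' | h'
    · exact (L.simN_succ_subset k).trans (ih (Nat.lt_succ_iff.mp h'))
    · rw [le_antisymm h h']

lemma le_eqlevel_of_mem (L : LTS S A) {s t : S} {n : ℕ} (h : (s, t) ∈ L.simN n) :
    (n : ℕ∞) ≤ L.eqlevel s t :=
  le_sSup ⟨n, rfl, h⟩

lemma mem_of_le_eqlevel (L : LTS S A) {s t : S} {n : ℕ} (h : (n : ℕ∞) ≤ L.eqlevel s t) :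
    (s, t) ∈ L.simN n := by
  by_contra hmem
  cases n with
  | zero => exact hmem (Set.mem_univ _)
  | succ m =>
    have hub : L.eqlevel s t ≤ (m : ℕ∞) := by
      apply sSup_le
      rintro e ⟨k, rfl, hk⟩
      by_contra hgt
      push_neg at hgt
      have hk' : m + 1 ≤ k := by exact_mod_cast hgt
      exact hmem (L.simN_antitone hk' hk)
    have : ((m + 1 : ℕ) : ℕ∞) ≤ (m : ℕ∞) := h.trans hub
    exact absurd (by exact_mod_cast this) (Nat.not_succ_le_self m)

end LTS

/-- If `L` is image-finite, `B ⊐ B'` (`B'` is a minimal expansion for `B`),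
and `LeastEqLev(B) < ω`, then `LeastEqLev(B) > LeastEqLev(B')`. -/
theorem leastEqLev_lt_of_minExp {S A : Type*} (L : LTS S A)
    (hfin : L.ImageFinite) (B B' : Set (S × S)) (hexp : L.MinExp B B')
    (hlt : L.leastEqLev B < ⊤) :
    L.leastEqLev B' < L.leastEqLev B := by
  obtain ⟨hcov, -⟩ := hexp
  lift L.leastEqLev B to ℕ using hlt.ne with n hn
  by_contra hle
  push_neg at hle
  have hB' : B' ⊆ L.simN n := by
    intro p hp
    have h1 : (n : ℕ∞) ≤ L.eqlevel p.1 p.2 :=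
      hle.trans (sInf_le ⟨p, hp, rfl⟩)
    have := L.mem_of_le_eqlevel h1
    simpa using this
  have hB : ∀ p ∈ B, ((n + 1 : ℕ) : ℕ∞) ≤ L.eqlevel p.1 p.2 := by
    intro p hp
    have : (p.1, p.2) ∈ L.simN (n + 1) := by
      show L.Covers (L.simN n) (p.1, p.2)
      simpa using L.covers_mono hB' (hcov p hp)
    exact L.le_eqlevel_of_mem this
  have hfinal : ((n + 1 : ℕ) : ℕ∞) ≤ L.leastEqLev B :=
    le_sInf (by rintro e ⟨p, hp, rfl⟩; exact hB p hp)
  rw [← hn] at hfinal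
  exact absurd (by exact_mod_cast hfinal) (Nat.not_succ_le_self n)
end

section
/- Let L be an image-finite labelled transition system and let B be a set of pairs of states of L with LeastEqLev(B) > 0. Then there exists a set B' of pairs of states such that B ⊐ B' (B' is a minimal expansion for B) and LeastEqLev(B') ≥ LeastEqLev(B) − 1. In particular, if B ⊆ ∼ (every pair in B is bisimilar), then B ⊐ B' for some B' ⊆ ∼. -/
section Aux

variable {S A : Type*} {L : LTS S A}

lemma covers_mono {B B' : Set (S × S)} (h : B ⊆ B') {p : S × S}
    (hp : L.Covers B p) : L.Covers B' p := by
  obtain ⟨h1, h2⟩ := hp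
  constructor
  · intro a s' hs'
    obtain ⟨t', ht', hmem⟩ := h1 a s' hs'
    exact ⟨t', ht', h hmem⟩
  · intro a t' ht'
    obtain ⟨s', hs', hmem⟩ := h2 a t' ht'
    exact ⟨s', hs', h hmem⟩

lemma simN_succ_subset (k : ℕ) : L.simN (k + 1) ⊆ L.simN k := by
  induction k with
  | zero => intro p _; trivial
  | succ k ih =>
    intro p hp
    exact covers_mono ih hp

lemma simN_antitone {m n : ℕ} (h : m ≤ n) : L.simN n ⊆ L.simN m := by
  induction n with
  | zero => simp_all
  | succ n ih =>
    rcases Nat.lt_or_ge m (n + 1) with h' | h'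
    · exact (simN_succ_subset n).trans (ih (Nat.lt_succ_iff.mp h'))
    · have : m = n + 1 := le_antisymm h h'
      subst this; exact fun _ hp => hp

lemma mem_simN_iff {s t : S} {k : ℕ} :
    (s, t) ∈ L.simN k ↔ (k : ℕ∞) ≤ L.eqlevel s t := by
  constructor
  · intro h
    exact le_sSup ⟨k, rfl, h⟩
  · intro h
    rcases k with _ | k
    · trivial
    · by_contra hc
      have hup : ∀ e ∈ {e : ℕ∞ | ∃ k' : ℕ, e = (k' : ℕ∞) ∧ (s, t) ∈ L.simN k'},
          e ≤ (k : ℕ∞) := by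
        rintro e ⟨k', rfl, hk'⟩
        have hle : k' ≤ k := by
          by_contra hge
          exact hc (simN_antitone (by omega) hk')
        exact_mod_cast hle
      have hsup : L.eqlevel s t ≤ (k : ℕ∞) := sSup_le hup
      have : ((k + 1 : ℕ) : ℕ∞) ≤ (k : ℕ∞) := h.trans hsup
      have : k + 1 ≤ k := by exact_mod_cast this
      omega

lemma eqlevel_top_iff {s t : S} :
    L.eqlevel s t = ⊤ ↔ ∀ k : ℕ, (s, t) ∈ L.simN k := by
  constructor
  · intro h k
    rw [mem_simN_iff, h]; exact le_top
  · intro h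
    by_contra hc
    obtain ⟨n, hn⟩ := WithTop.ne_top_iff_exists.mp hc
    have h2 := mem_simN_iff.mp (h (n + 1))
    have hn' : (n : ℕ∞) = L.eqlevel s t := by exact_mod_cast hn
    rw [← hn'] at h2
    have : n + 1 ≤ n := by exact_mod_cast h2
    omega

/-- The intersection of all stratified equivalences. -/
def LTS.simInf (L : LTS S A) : Set (S × S) := {p | ∀ k : ℕ, p ∈ L.simN k}

lemma simInf_bisimulation (hfin : L.ImageFinite) : L.Bisimulation L.simInf := by
  rintro ⟨s, t⟩ hp
  constructor
  · intro a s' hs'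
    by_contra hc
    push_neg at hc
    classical
    have hT : {t' | L.Tr a t t'}.Finite := hfin a t
    have hf : ∀ t' : S, ∃ k : ℕ, L.Tr a t t' → (s', t') ∈ L.simN k → False := by
      intro t'
      by_cases ht' : L.Tr a t t'
      · obtain ⟨k, hk⟩ : ∃ k, (s', t') ∉ L.simN k := by
          by_contra hall
          push_neg at hall
          exact hc t' ht' hall
        exact ⟨k, fun _ h => hk h⟩
      · exact ⟨0, fun h _ => ht' h⟩
    choose f hf using hf
    set K := hT.toFinset.sup f with hK
    have := (hp (K + 1)).1 a s' hs'
    obtain ⟨t', ht', hmem⟩ := this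
    have hle : f t' ≤ K := Finset.le_sup (by simp [Set.Finite.mem_toFinset]; exact ht')
    exact hf t' ht' (simN_antitone hle hmem)
  · intro a t' ht'
    by_contra hc
    push_neg at hc
    classical
    have hT : {s' | L.Tr a s s'}.Finite := hfin a s
    have hf : ∀ s' : S, ∃ k : ℕ, L.Tr a s s' → (s', t') ∈ L.simN k → False := by
      intro s'
      by_cases hs' : L.Tr a s s'
      · obtain ⟨k, hk⟩ : ∃ k, (s', t') ∉ L.simN k := by
          by_contra hall
          push_neg at hall
          exact hc s' hs' hall
        exact ⟨k, fun _ h => hk h⟩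
      · exact ⟨0, fun h _ => hs' h⟩
    choose f hf using hf
    set K := hT.toFinset.sup f with hK
    have := (hp (K + 1)).2 a t' ht'
    obtain ⟨s', hs', hmem⟩ := this
    have hle : f s' ≤ K := Finset.le_sup (by simp [Set.Finite.mem_toFinset]; exact hs')
    exact hf s' hs' (simN_antitone hle hmem)

lemma bisimulation_subset_simN {R : Set (S × S)} (hR : L.Bisimulation R) (k : ℕ) :
    R ⊆ L.simN k := by
  induction k with
  | zero => intro p _; trivial
  | succ k ih =>
    intro p hp
    exact covers_mono ih (hR p hp)

/-- A finite nonempty chain of sets has a least element. -/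
lemma finite_chain_least {α : Type*} {c : Set (Set α)} (hc : IsChain (· ⊆ ·) c)
    (hfin : c.Finite) (hne : c.Nonempty) : ∃ m ∈ c, ∀ x ∈ c, m ⊆ x := by
  obtain ⟨m, hm, hmin⟩ : ∃ m ∈ c, ∀ x ∈ c, id x ⊆ id m → id m = id x := by
    obtain ⟨m, hm, hmin⟩ := hfin.exists_minimalFor id c hne
    exact ⟨m, hm, fun x hx h => le_antisymm (hmin hx h) h⟩
  refine ⟨m, hm, fun x hx => ?_⟩
  rcases eq_or_ne x m with rfl | hne'
  · exact subset_rfl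
  · rcases hc hx hm hne' with h | h
    · have h2 := hmin x hx h
      simp only [id] at h2
      exact h2.subset
    · exact h

/-- Key Zorn argument: if `B₀` covers `B` and `L` is image-finite then there is a minimal
expansion `B' ⊆ B₀` for `B`. -/
lemma exists_minExp_subset (hfin : L.ImageFinite) {B B₀ : Set (S × S)}
    (hcov : L.CoversSet B₀ B) : ∃ B', B' ⊆ B₀ ∧ L.MinExp B B' := by
  classical
  set 𝒮 : Set (Set (S × S)) := {C | C ⊆ B₀ ∧ L.CoversSet C B} with h𝒮
  have hchain : ∀ c ⊆ 𝒮, IsChain (· ⊆ ·) c → c.Nonempty →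
      ∃ lb ∈ 𝒮, ∀ s ∈ c, lb ⊆ s := by
    intro c hc𝒮 hchain hne
    refine ⟨⋂₀ c, ⟨?_, ?_⟩, fun C hC => Set.sInter_subset_of_mem hC⟩
    · obtain ⟨C, hC⟩ := hne
      exact (Set.sInter_subset_of_mem hC).trans (hc𝒮 hC).1
    · rintro ⟨s, t⟩ hp
      constructor
      · intro a s' hs'
        -- witness sets
        set W : Set (S × S) → Set S := fun C => {t' | L.Tr a t t' ∧ (s', t') ∈ C} with hW
        have hWchain : IsChain (· ⊆ ·) (W '' c) := by
          rintro _ ⟨C, hC, rfl⟩ _ ⟨D, hD, rfl⟩ _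
          rcases eq_or_ne C D with rfl | hne'
          · left; exact subset_rfl
          · rcases hchain hC hD hne' with h | h
            · left; rintro x ⟨hx1, hx2⟩; exact ⟨hx1, h hx2⟩
            · right; rintro x ⟨hx1, hx2⟩; exact ⟨hx1, h hx2⟩
        have hWfin : (W '' c).Finite := by
          have hsub : ∀ D ∈ W '' c, D ⊆ {t' | L.Tr a t t'} := by
            rintro _ ⟨C, _, rfl⟩ x ⟨hx1, _⟩; exact hx1
          exact Set.Finite.finite_subsets (hfin a t) |>.subset
            (by rintro D ⟨C, hC, rfl⟩; exact hsub _ ⟨C, hC, rfl⟩)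
        have hWne : (W '' c).Nonempty := hne.image W
        obtain ⟨m, ⟨C₀, hC₀, rfl⟩, hmleast⟩ := finite_chain_least hWchain hWfin hWne
        have hC₀cov := ((hc𝒮 hC₀).2 (s, t) hp).1 a s' hs'
        obtain ⟨t', ht', hmem⟩ := hC₀cov
        refine ⟨t', ht', ?_⟩
        intro C hC
        have : W C₀ ⊆ W C := hmleast (W C) ⟨C, hC, rfl⟩
        exact (this ⟨ht', hmem⟩).2
      · intro a t' ht'
        set W : Set (S × S) → Set S := fun C => {s' | L.Tr a s s' ∧ (s', t') ∈ C} with hW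
        have hWchain : IsChain (· ⊆ ·) (W '' c) := by
          rintro _ ⟨C, hC, rfl⟩ _ ⟨D, hD, rfl⟩ _
          rcases eq_or_ne C D with rfl | hne'
          · left; exact subset_rfl
          · rcases hchain hC hD hne' with h | h
            · left; rintro x ⟨hx1, hx2⟩; exact ⟨hx1, h hx2⟩
            · right; rintro x ⟨hx1, hx2⟩; exact ⟨hx1, h hx2⟩
        have hWfin : (W '' c).Finite := by
          have hsub : ∀ D ∈ W '' c, D ⊆ {s' | L.Tr a s s'} := by
            rintro _ ⟨C, _, rfl⟩ x ⟨hx1, _⟩; exact hx1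
          exact Set.Finite.finite_subsets (hfin a s) |>.subset
            (by rintro D ⟨C, hC, rfl⟩; exact hsub _ ⟨C, hC, rfl⟩)
        have hWne : (W '' c).Nonempty := hne.image W
        obtain ⟨m, ⟨C₀, hC₀, rfl⟩, hmleast⟩ := finite_chain_least hWchain hWfin hWne
        have hC₀cov := ((hc𝒮 hC₀).2 (s, t) hp).2 a t' ht'
        obtain ⟨s', hs', hmem⟩ := hC₀cov
        refine ⟨s', hs', ?_⟩
        intro C hC
        have : W C₀ ⊆ W C := hmleast (W C) ⟨C, hC, rfl⟩
        exact (this ⟨hs', hmem⟩).2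
  obtain ⟨m, hmx, hmin⟩ := zorn_superset_nonempty 𝒮 hchain B₀ ⟨subset_rfl, hcov⟩
  refine ⟨m, hmin.prop.1, hmin.prop.2, ?_⟩
  intro B'' hB'' hB''cov
  have : B'' ∈ 𝒮 := ⟨hB''.subset.trans hmin.prop.1, hB''cov⟩
  exact absurd (hmin.eq_of_subset this hB''.subset) hB''.ne

end Aux

/-- If `L` is image-finite and `LeastEqLev(B) > 0`, then there is a minimal
expansion `B'` for `B` with `LeastEqLev(B') ≥ LeastEqLev(B) − 1` (with `ω − 1 = ω`).
In particular, if every pair in `B` is bisimilar, then `B ⊐ B'` for some `B'` consisting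
of bisimilar pairs only. -/
theorem exists_min_expansion_of_leastEqLev_pos {S A : Type*} (L : LTS S A)
    (hfin : L.ImageFinite) (B : Set (S × S)) (hB : 0 < L.leastEqLev B) :
    (∃ B' : Set (S × S), L.MinExp B B' ∧ L.leastEqLev B - 1 ≤ L.leastEqLev B') ∧
    ((∀ p ∈ B, L.Bisim p.1 p.2) →
      ∃ B' : Set (S × S), L.MinExp B B' ∧ ∀ p ∈ B', L.Bisim p.1 p.2) := by
  have hle : ∀ p ∈ B, L.leastEqLev B ≤ L.eqlevel p.1 p.2 := fun p hp =>
    sInf_le ⟨p, hp, rfl⟩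
  constructor
  · -- first part
    by_cases htop : L.leastEqLev B = ⊤
    · have hsub : B ⊆ L.simInf := by
        intro p hp
        have : L.eqlevel p.1 p.2 = ⊤ := le_antisymm le_top (htop ▸ hle p hp)
        exact eqlevel_top_iff.mp this
      have hcov : L.CoversSet L.simInf B := fun p hp =>
        simInf_bisimulation hfin p (hsub hp)
      obtain ⟨B', hB'sub, hB'min⟩ := exists_minExp_subset hfin hcov
      refine ⟨B', hB'min, ?_⟩
      have htop' : L.leastEqLev B' = ⊤ := by
        refine le_antisymm le_top (le_sInf ?_)
        rintro e ⟨p, hp, rfl⟩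
        exact le_of_eq (eqlevel_top_iff.mpr (hB'sub hp)).symm
      rw [htop']
      exact le_top
    · obtain ⟨m, hm⟩ := WithTop.ne_top_iff_exists.mp htop
      obtain ⟨n, rfl⟩ : ∃ n, m = n + 1 := by
        rcases m with _ | n
        · rw [← hm] at hB; exact absurd hB (lt_irrefl _)
        · exact ⟨n, rfl⟩
      set B₀ : Set (S × S) := {q | (n : ℕ∞) ≤ L.eqlevel q.1 q.2} with hB₀
      have hcov : L.CoversSet B₀ B := by
        intro p hp
        have hm' : ((n + 1 : ℕ) : ℕ∞) = L.leastEqLev B := by exact_mod_cast hm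
        have h1 : ((n + 1 : ℕ) : ℕ∞) ≤ L.eqlevel p.1 p.2 := hm'.le.trans (hle p hp)
        have h2 : p ∈ L.simN (n + 1) := by
          rcases p with ⟨s, t⟩
          exact mem_simN_iff.mpr h1
        have hsub : L.simN n ⊆ B₀ := by
          rintro ⟨s, t⟩ hq
          exact mem_simN_iff.mp hq
        exact covers_mono hsub h2
      obtain ⟨B', hB'sub, hB'min⟩ := exists_minExp_subset hfin hcov
      refine ⟨B', hB'min, ?_⟩
      have hm' : ((n + 1 : ℕ) : ℕ∞) = L.leastEqLev B := by exact_mod_cast hm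
      have hcast : L.leastEqLev B - 1 = (n : ℕ∞) := by
        rw [← hm']
        norm_cast
      rw [hcast]
      refine le_sInf ?_
      rintro e ⟨p, hp, rfl⟩
      exact hB'sub hp
  · -- second part
    intro hbisim
    have hsub : B ⊆ L.simInf := by
      intro p hp
      obtain ⟨R, hR, hpR⟩ := hbisim p hp
      exact fun k => bisimulation_subset_simN hR k hpR
    have hcov : L.CoversSet L.simInf B := fun p hp =>
      simInf_bisimulation hfin p (hsub hp)
    obtain ⟨B', hB'sub, hB'min⟩ := exists_minExp_subset hfin hcov
    exact ⟨B', hB'min, fun p hp => ⟨L.simInf, simInf_bisimulation hfin, hB'sub hp⟩⟩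
end

section
/- Let G = (N, Act, R) be a first-order grammar, let x_i be a variable and H a term over N with H ≠ x_i, and let H' be the unique term such that x_i does not occur in H' and H' = H{(x_i ↦ H')} (the limit H{(x_i,H)}{(x_i,H)}⋯). Then for every substitution σ: eqlevel(x_iσ, Hσ) = eqlevel(x_iσ, H'σ) in L^act_G. -/
/-- The "signature" of a first-order grammar: a finite set of ranked nonterminals
(represented as `Fin ntCount`, with arities) and a finite set of actions
(represented as `Fin actCount`). -/
structure GrammarSig where
  ntCount : ℕ
  arity : Fin ntCount → ℕ
  actCount : ℕ

/-- The polynomial functor whose coinductive fixed point is the set of (finite or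
infinite) terms over the nonterminals: a node is labelled either by a nonterminal
`A` (with `arity A` ordered children) or by a variable `x_n`, `n : ℕ` (a leaf). -/
def GrammarSig.P (S : GrammarSig) : PFunctor :=
  ⟨Fin S.ntCount ⊕ ℕ, fun l =>
    match l with
    | Sum.inl A => Fin (S.arity A)
    | Sum.inr _ => Empty⟩

/-- Terms over the signature `S`: finite or infinite ordered trees with nodes labelled
by nonterminals (inner nodes) or variables (leaves). -/
def GTerm (S : GrammarSig) := PFunctor.M S.P

/-- The term consisting of the single variable `x_n`. -/
def GTerm.var (S : GrammarSig) (n : ℕ) : GTerm S :=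
  PFunctor.M.mk ⟨Sum.inr n, fun e => e.elim⟩

/-- The term `A(c 0, …, c (m-1))`. -/
def GTerm.app {S : GrammarSig} (A : Fin S.ntCount) (c : Fin (S.arity A) → GTerm S) :
    GTerm S :=
  PFunctor.M.mk ⟨Sum.inl A, c⟩

/-- Applying a substitution `σ` to a term `T`: every occurrence of a variable `x_n`
in `T` is replaced by `σ n` (defined corecursively). -/
def GTerm.subst {S : GrammarSig} (σ : ℕ → GTerm S) (T : GTerm S) : GTerm S :=
  PFunctor.M.corec
    (fun st : Bool × GTerm S =>
      match PFunctor.M.dest st.2 with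
      | ⟨Sum.inl A, c⟩ => ⟨Sum.inl A, fun i => (st.1, c i)⟩
      | ⟨Sum.inr n, _⟩ =>
        if st.1 then
          ⟨(PFunctor.M.dest (σ n)).1, fun i => (false, (PFunctor.M.dest (σ n)).2 i)⟩
        else ⟨Sum.inr n, fun e => e.elim⟩)
    (true, T)

/-- A substitution (as a total map `ℕ → GTerm S`) has finite support. -/
def FinSupp {S : GrammarSig} (σ : ℕ → GTerm S) : Prop :=
  {n | σ n ≠ GTerm.var S n}.Finite

/-- `childRel S T T'`: `T'` is a root-successor (depth-1 subterm occurrence) of `T`. -/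
def childRel (S : GrammarSig) : GTerm S → GTerm S → Prop := fun T T' =>
  ∃ (A : Fin S.ntCount) (c : Fin (S.arity A) → GTerm S), T = GTerm.app A c ∧ ∃ i, T' = c i

/-- `T'` is a subterm of `T`. -/
def SubtermOf (S : GrammarSig) (T' T : GTerm S) : Prop :=
  Relation.ReflTransGen (childRel S) T T'

/-- The variable `x_n` occurs in `T`. -/
def VarOccurs (S : GrammarSig) (n : ℕ) (T : GTerm S) : Prop :=
  SubtermOf S (GTerm.var S n) T

/-- `OccAtDepth S d T V`: `V` has a subterm-occurrence in `T` at depth `d`. -/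
inductive OccAtDepth (S : GrammarSig) : ℕ → GTerm S → GTerm S → Prop
  | refl (T : GTerm S) : OccAtDepth S 0 T T
  | step {d : ℕ} {T T' V : GTerm S} :
      childRel S T T' → OccAtDepth S d T' V → OccAtDepth S (d + 1) T V

/-- A term is regular if it has only finitely many distinct subterms. -/
def RegularT (S : GrammarSig) (T : GTerm S) : Prop := {T' | SubtermOf S T' T}.Finite

/-- The presentation size of a (regular) term: the number of its distinct subterms. -/
noncomputable def pressize (S : GrammarSig) (T : GTerm S) : ℕ :=
  {T' | SubtermOf S T' T}.ncard

/-- Finite terms over the signature `S`. -/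
inductive FTerm (S : GrammarSig) where
  | var : ℕ → FTerm S
  | app : (A : Fin S.ntCount) → (Fin (S.arity A) → FTerm S) → FTerm S

/-- The (finite or infinite) term corresponding to a finite term. -/
def FTerm.toTerm {S : GrammarSig} : FTerm S → GTerm S
  | .var n => GTerm.var S n
  | .app A c => GTerm.app A (fun i => (c i).toTerm)

/-- The variable `x_n` occurs in the finite term `E`. -/
def FTerm.VOccurs {S : GrammarSig} (n : ℕ) : FTerm S → Prop
  | .var m => m = n
  | .app _ c => ∃ i, (c i).VOccurs n

/-- The depth of a finite term (the largest depth of a subterm occurrence). -/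
def FTerm.depth {S : GrammarSig} : FTerm S → ℕ
  | .var _ => 0
  | .app _ c => Finset.univ.sup fun i => (c i).depth + 1

/-- A rule `A(x_0, …, x_{m−1}) →ₐ E` of a first-order grammar: `E` is a finite term
all of whose variables are among `x_0, …, x_{m−1}` where `m = arity A`. -/
structure GRule (S : GrammarSig) where
  nt : Fin S.ntCount
  act : Fin S.actCount
  rhs : FTerm S
  rhs_wf : ∀ n : ℕ, rhs.VOccurs n → n < S.arity nt

/-- A first-order grammar: a signature together with a finite set (list) of rules. -/
structure FOGrammar where
  sig : GrammarSig
  rules : List (GRule sig)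

/-- The term `A(x_0, …, x_{m−1})` (the left-hand side of rules for `A`). -/
def lhsTerm {S : GrammarSig} (A : Fin S.ntCount) : GTerm S :=
  GTerm.app A fun i => GTerm.var S i.val

/-- The rule-based LTS `L^rul_G`: states are the terms, actions are the rules of `G`,
and a rule `r : A(x_0,…,x_{m−1}) →ₐ E` induces `(A(x_0,…,x_{m−1}))σ →r Eσ` for every
substitution `σ`. -/
def LTSrul (G : FOGrammar) : LTS (GTerm G.sig) (GRule G.sig) where
  Tr r T T' := r ∈ G.rules ∧ ∃ σ : ℕ → GTerm G.sig, FinSupp σ ∧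
    T = GTerm.subst σ (lhsTerm r.nt) ∧ T' = GTerm.subst σ r.rhs.toTerm

/-- The action-based LTS `L^act_G`: the transitions of `L^rul_G` relabelled by the
actions of the rules; in addition each variable `x_n` has its own fresh action
(represented by `Sum.inr n`) with the single transition `x_n →_{a_{x_n}} x_n`. -/
def LTSact (G : FOGrammar) : LTS (GTerm G.sig) (Fin G.sig.actCount ⊕ ℕ) where
  Tr a T T' :=
    match a with
    | Sum.inl a => ∃ r : GRule G.sig, r.act = a ∧ (LTSrul G).Tr r T T'
    | Sum.inr n => T = GTerm.var G.sig n ∧ T' = GTerm.var G.sig n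

/-- `RPath G T w T'`: the path `T →w T'` in the rule-based LTS `L^rul_G`, `w ∈ R*`. -/
inductive RPath (G : FOGrammar) : GTerm G.sig → List (GRule G.sig) → GTerm G.sig → Prop
  | nil (T : GTerm G.sig) : RPath G T [] T
  | cons {T T1 T' : GTerm G.sig} {r : GRule G.sig} {w : List (GRule G.sig)} :
      (LTSrul G).Tr r T T1 → RPath G T1 w T' → RPath G T (r :: w) T'

/-- `APath G T w T'`: the path `T →w T'` in the action-based LTS `L^act_G` for a word
`w ∈ Act*` of proper actions (using no special variable transitions). -/
inductive APath (G : FOGrammar) :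
    GTerm G.sig → List (Fin G.sig.actCount) → GTerm G.sig → Prop
  | nil (T : GTerm G.sig) : APath G T [] T
  | cons {T T1 T' : GTerm G.sig} {a : Fin G.sig.actCount} {w : List (Fin G.sig.actCount)} :
      (LTSact G).Tr (Sum.inl a) T T1 → APath G T1 w T' → APath G T (a :: w) T'

/-- The substitution that (only) replaces the variable `x_i` by `K`. -/
def singleSub {S : GrammarSig} (i : ℕ) (K : GTerm S) : ℕ → GTerm S :=
  fun j => if j = i then K else GTerm.var S j

namespace GTerm
variable {S : GrammarSig}

theorem eq_of_dest_eq {x y : GTerm S} (h : PFunctor.M.dest (F := S.P) x = PFunctor.M.dest y) : x = y := by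
  rw [← PFunctor.M.mk_dest (x := x), h]
  exact PFunctor.M.mk_dest (F := S.P) y

theorem dest_var (n : ℕ) :
    PFunctor.M.dest (F := S.P) (GTerm.var S n) = ⟨Sum.inr n, fun e => e.elim⟩ := rfl

theorem dest_app {A : Fin S.ntCount} (c : Fin (S.arity A) → GTerm S) :
    PFunctor.M.dest (F := S.P) (GTerm.app A c) = ⟨Sum.inl A, c⟩ := rfl

def substF (σ : ℕ → GTerm S) : Bool × GTerm S → S.P.Obj (Bool × GTerm S) :=
  fun st =>
    match PFunctor.M.dest st.2 with
    | ⟨Sum.inl A, c⟩ => ⟨Sum.inl A, fun i => (st.1, c i)⟩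
    | ⟨Sum.inr n, _⟩ =>
      if st.1 then
        ⟨(PFunctor.M.dest (σ n)).1, fun i => (false, (PFunctor.M.dest (σ n)).2 i)⟩
      else ⟨Sum.inr n, fun e => e.elim⟩

theorem subst_eq (σ : ℕ → GTerm S) (T : GTerm S) :
    GTerm.subst σ T = PFunctor.M.corec (substF σ) (true, T) := rfl

theorem corec_false (σ : ℕ → GTerm S) (U : GTerm S) :
    PFunctor.M.corec (substF σ) (false, U) = U := by
  apply PFunctor.M.bisim (fun x y => x = PFunctor.M.corec (substF σ) (false, y))
  · intro x y h
    subst h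
    rcases hy : PFunctor.M.dest y with ⟨a | n, g⟩
    · refine ⟨Sum.inl a, fun i => PFunctor.M.corec (substF σ) (false, g i), g, ?_, rfl, fun i => rfl⟩
      rw [PFunctor.M.dest_corec]
      simp only [substF, hy]
      rfl
    · refine ⟨Sum.inr n, fun i => i.elim, g, ?_, rfl, fun i => i.elim⟩
      rw [PFunctor.M.dest_corec]
      simp [substF, hy, PFunctor.map]
      exact congrArg _ (funext fun i => i.elim)
  · rfl

theorem subst_var (σ : ℕ → GTerm S) (n : ℕ) : GTerm.subst σ (GTerm.var S n) = σ n := by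
  apply eq_of_dest_eq
  rw [subst_eq, PFunctor.M.dest_corec]
  simp only [substF, dest_var, if_true]
  rcases h : PFunctor.M.dest (σ n) with ⟨a, g⟩
  show (⟨a, PFunctor.M.corec (substF σ) ∘ fun i => (false, g i)⟩ : S.P.Obj _) = _
  exact congrArg _ (funext fun i => corec_false σ (g i))

theorem subst_app (σ : ℕ → GTerm S) {A : Fin S.ntCount} (c : Fin (S.arity A) → GTerm S) :
    GTerm.subst σ (GTerm.app A c) = GTerm.app A (fun i => GTerm.subst σ (c i)) := by
  apply eq_of_dest_eq
  rw [subst_eq, PFunctor.M.dest_corec]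
  simp only [substF, dest_app]
  rfl

theorem var_inj {n m : ℕ} (h : GTerm.var S n = GTerm.var S m) : n = m := by
  have := congrArg Sigma.fst (PFunctor.M.mk_inj h)
  exact Sum.inr.inj this

theorem var_ne_app {n : ℕ} {A : Fin S.ntCount} {c : Fin (S.arity A) → GTerm S} :
    GTerm.var S n ≠ GTerm.app A c := by
  intro h
  have := congrArg Sigma.fst (PFunctor.M.mk_inj h)
  simp at this

theorem app_inj_head {A B : Fin S.ntCount} {c : Fin (S.arity A) → GTerm S}
    {d : Fin (S.arity B) → GTerm S} (h : GTerm.app A c = GTerm.app B d) : A = B := by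
  have := congrArg Sigma.fst (PFunctor.M.mk_inj h)
  exact Sum.inl.inj this

theorem app_inj {A : Fin S.ntCount} {c d : Fin (S.arity A) → GTerm S}
    (h : GTerm.app A c = GTerm.app A d) : c = d := by
  have h2 := PFunctor.M.mk_inj h
  replace h2 := Sigma.mk.inj_iff.mp h2
  exact eq_of_heq h2.2

theorem term_cases (T : GTerm S) :
    (∃ n, T = GTerm.var S n) ∨ ∃ A c, T = GTerm.app A c := by
  rcases h : PFunctor.M.dest (F := S.P) T with ⟨a | n, g⟩
  · right
    exact ⟨a, g, by rw [← PFunctor.M.mk_dest T, h]; rfl⟩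
  · left
    refine ⟨n, ?_⟩
    rw [← PFunctor.M.mk_dest T, h]
    exact congrArg _ (congrArg _ (funext fun e => e.elim))

theorem subst_comp (σ ρ : ℕ → GTerm S) (T : GTerm S) :
    GTerm.subst σ (GTerm.subst ρ T) = GTerm.subst (fun n => GTerm.subst σ (ρ n)) T := by
  apply PFunctor.M.bisim (fun x y =>
    (∃ T, x = GTerm.subst σ (GTerm.subst ρ T) ∧ y = GTerm.subst (fun n => GTerm.subst σ (ρ n)) T)
      ∨ x = y)
  · intro x y h
    have hxy : ∀ x : GTerm S, ∃ a f f', PFunctor.M.dest (F := S.P) x = ⟨a, f⟩ ∧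
        PFunctor.M.dest (F := S.P) x = ⟨a, f'⟩ ∧ ∀ i, ((∃ T, f i = GTerm.subst σ (GTerm.subst ρ T) ∧ f' i = GTerm.subst (fun n => GTerm.subst σ (ρ n)) T) ∨ f i = f' i) := by
      intro x
      rcases hx : PFunctor.M.dest (F := S.P) x with ⟨a, g⟩
      exact ⟨a, g, g, rfl, rfl, fun i => Or.inr rfl⟩
    rcases h with ⟨T, rfl, rfl⟩ | rfl
    · rcases term_cases T with ⟨n, rfl⟩ | ⟨A, c, rfl⟩
      · rw [subst_var, subst_var]
        exact hxy _
      · rw [subst_app, subst_app, subst_app]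
        rw [dest_app, dest_app]  -- just to check names; we use refine below
        exact ⟨Sum.inl A, _, _, rfl, rfl, fun i => Or.inl ⟨c i, rfl, rfl⟩⟩
    · exact hxy _
  · exact Or.inl ⟨T, rfl, rfl⟩

theorem subst_id (T : GTerm S) : GTerm.subst (fun n => GTerm.var S n) T = T := by
  apply PFunctor.M.bisim (fun x y => x = GTerm.subst (fun n => GTerm.var S n) y ∨ x = y)
  · intro x y h
    have hxy : ∀ x : GTerm S, ∃ a f f', PFunctor.M.dest (F := S.P) x = ⟨a, f⟩ ∧
        PFunctor.M.dest (F := S.P) x = ⟨a, f'⟩ ∧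
        ∀ i, (f i = GTerm.subst (fun n => GTerm.var S n) (f' i) ∨ f i = f' i) := by
      intro x
      rcases hx : PFunctor.M.dest (F := S.P) x with ⟨a, g⟩
      exact ⟨a, g, g, rfl, rfl, fun i => Or.inr rfl⟩
    rcases h with rfl | rfl
    · rcases term_cases y with ⟨n, rfl⟩ | ⟨A, c, rfl⟩
      · rw [subst_var]
        exact hxy _
      · rw [subst_app, dest_app, dest_app]
        exact ⟨Sum.inl A, _, _, rfl, rfl, fun i => Or.inl rfl⟩
    · exact hxy _
  · exact Or.inl rfl

theorem occ_var_self (n : ℕ) : VarOccurs S n (GTerm.var S n) :=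
  Relation.ReflTransGen.refl

theorem occ_app {n : ℕ} {A : Fin S.ntCount} {c : Fin (S.arity A) → GTerm S} {i}
    (h : VarOccurs S n (c i)) : VarOccurs S n (GTerm.app A c) :=
  Relation.ReflTransGen.head ⟨A, c, rfl, i, rfl⟩ h

theorem subst_congr {σ τ : ℕ → GTerm S} (T : GTerm S)
    (h : ∀ n, VarOccurs S n T → σ n = τ n) : GTerm.subst σ T = GTerm.subst τ T := by
  apply PFunctor.M.bisim (fun x y =>
    (∃ T, x = GTerm.subst σ T ∧ y = GTerm.subst τ T ∧ ∀ n, VarOccurs S n T → σ n = τ n)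
      ∨ x = y)
  · intro x y h
    have hxy : ∀ x : GTerm S, ∃ a f f', PFunctor.M.dest (F := S.P) x = ⟨a, f⟩ ∧
        PFunctor.M.dest (F := S.P) x = ⟨a, f'⟩ ∧
        ∀ i, ((∃ T, f i = GTerm.subst σ T ∧ f' i = GTerm.subst τ T ∧
          ∀ n, VarOccurs S n T → σ n = τ n) ∨ f i = f' i) := by
      intro x
      rcases hx : PFunctor.M.dest (F := S.P) x with ⟨a, g⟩
      exact ⟨a, g, g, rfl, rfl, fun i => Or.inr rfl⟩
    rcases h with ⟨T, rfl, rfl, hT⟩ | rfl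
    · rcases term_cases T with ⟨n, rfl⟩ | ⟨A, c, rfl⟩
      · rw [subst_var, subst_var, hT n (occ_var_self n)]
        exact hxy _
      · rw [subst_app, subst_app, dest_app, dest_app]
        exact ⟨Sum.inl A, _, _, rfl, rfl,
          fun i => Or.inl ⟨c i, rfl, rfl, fun n hn => hT n (occ_app hn)⟩⟩
    · exact hxy _
  · exact Or.inl ⟨T, rfl, rfl, h⟩

theorem subst_lhs (σ : ℕ → GTerm S) (A : Fin S.ntCount) :
    GTerm.subst σ (lhsTerm A) = GTerm.app A (fun j => σ j.val) := by
  rw [lhsTerm, subst_app]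
  exact congrArg _ (funext fun j => subst_var σ j.val)

theorem ftsubst_congr {σ τ : ℕ → GTerm S} (E : FTerm S)
    (h : ∀ n, E.VOccurs n → σ n = τ n) :
    GTerm.subst σ E.toTerm = GTerm.subst τ E.toTerm := by
  induction E with
  | var n => rw [FTerm.toTerm, subst_var, subst_var]; exact h n rfl
  | app A c ih =>
    rw [FTerm.toTerm, subst_app, subst_app]
    exact congrArg _ (funext fun i => ih i (fun n hn => h n ⟨i, hn⟩))

end GTerm

namespace LTS
variable {St Ac : Type*} (L : LTS St Ac)

theorem covers_mono_s12 {B B' : Set (St × St)} (h : B ⊆ B') {p} (hc : L.Covers B p) :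
    L.Covers B' p := by
  refine ⟨fun a s' ht => ?_, fun a t' ht => ?_⟩
  · obtain ⟨t', h1, h2⟩ := hc.1 a s' ht
    exact ⟨t', h1, h h2⟩
  · obtain ⟨s', h1, h2⟩ := hc.2 a t' ht
    exact ⟨s', h1, h h2⟩

theorem simN_mono : ∀ k, L.simN (k + 1) ⊆ L.simN k := by
  intro k
  induction k with
  | zero => exact Set.subset_univ _
  | succ k ih => exact fun p hp => L.covers_mono_s12 ih hp

theorem simN_refl : ∀ k (s : St), (s, s) ∈ L.simN k := by
  intro k
  induction k with
  | zero => exact fun s => Set.mem_univ _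
  | succ k ih =>
    exact fun s => ⟨fun a s' ht => ⟨s', ht, ih s'⟩, fun a t' ht => ⟨t', ht, ih t'⟩⟩

theorem simN_symm : ∀ k {s t : St}, (s, t) ∈ L.simN k → (t, s) ∈ L.simN k := by
  intro k
  induction k with
  | zero => exact fun {s t} _ => Set.mem_univ _
  | succ k ih =>
    intro s t h
    refine ⟨fun a t' ht => ?_, fun a s' hs => ?_⟩
    · obtain ⟨s', h1, h2⟩ := h.2 a t' ht
      exact ⟨s', h1, ih h2⟩
    · obtain ⟨t', h1, h2⟩ := h.1 a s' hs
      exact ⟨t', h1, ih h2⟩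

theorem simN_trans : ∀ k {s t u : St},
    (s, t) ∈ L.simN k → (t, u) ∈ L.simN k → (s, u) ∈ L.simN k := by
  intro k
  induction k with
  | zero => exact fun {s t u} _ _ => Set.mem_univ _
  | succ k ih =>
    intro s t u h1 h2
    refine ⟨fun a s' hs => ?_, fun a u' hu => ?_⟩
    · obtain ⟨t', ht1, ht2⟩ := h1.1 a s' hs
      obtain ⟨u', hu1, hu2⟩ := h2.1 a t' ht1
      exact ⟨u', hu1, ih ht2 hu2⟩
    · obtain ⟨t', ht1, ht2⟩ := h2.2 a u' hu
      obtain ⟨s', hs1, hs2⟩ := h1.2 a t' ht1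
      exact ⟨s', hs1, ih hs2 ht2⟩

theorem eqlevel_congr {s t s' t' : St}
    (h : ∀ k, (s, t) ∈ L.simN k ↔ (s', t') ∈ L.simN k) :
    L.eqlevel s t = L.eqlevel s' t' := by
  unfold LTS.eqlevel
  congr 1
  ext e
  constructor
  · rintro ⟨k, rfl, hk⟩
    exact ⟨k, rfl, (h k).mp hk⟩
  · rintro ⟨k, rfl, hk⟩
    exact ⟨k, rfl, (h k).mpr hk⟩

end LTS

section Grammar
open GTerm
variable {G : FOGrammar}

theorem tr_var_src {n : ℕ} {a} {T' : GTerm G.sig}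
    (h : (LTSact G).Tr a (GTerm.var G.sig n) T') : a = Sum.inr n ∧ T' = GTerm.var G.sig n := by
  match a with
  | Sum.inl b =>
    obtain ⟨r, _, _, ρ, _, hT, _⟩ := h
    rw [subst_lhs] at hT
    exact absurd hT var_ne_app
  | Sum.inr m =>
    obtain ⟨h1, h2⟩ := h
    obtain rfl := var_inj h1
    exact ⟨rfl, h2⟩

theorem tr_app_inl {A : Fin G.sig.ntCount} {d : Fin (G.sig.arity A) → GTerm G.sig}
    {a} {U : GTerm G.sig} (h : (LTSact G).Tr (Sum.inl a) (GTerm.app A d) U) :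
    ∃ r ∈ G.rules, r.act = a ∧ ∃ hnt : r.nt = A, ∃ ρ : ℕ → GTerm G.sig, FinSupp ρ ∧
      (∀ j : Fin (G.sig.arity A), ρ j.val = d j) ∧ U = GTerm.subst ρ r.rhs.toTerm := by
  obtain ⟨r, hact, hmem, ρ, hfs, hT, hU⟩ := h
  rw [subst_lhs] at hT
  obtain rfl : r.nt = A := (app_inj_head hT).symm
  have := app_inj hT
  exact ⟨r, hmem, hact, rfl, ρ, hfs, fun j => (congrFun this j).symm ▸ rfl, hU⟩

theorem tr_app_of (r : GRule G.sig) (hmem : r ∈ G.rules) (ρ : ℕ → GTerm G.sig)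
    (hfs : FinSupp ρ) :
    (LTSact G).Tr (Sum.inl r.act) (GTerm.app r.nt (fun j => ρ j.val))
      (GTerm.subst ρ r.rhs.toTerm) :=
  ⟨r, rfl, hmem, ρ, hfs, (subst_lhs ρ r.nt).symm, rfl⟩

theorem covers_half (m : ℕ)
    (hcong : ∀ σ τ : ℕ → GTerm G.sig, (∀ j, (σ j, τ j) ∈ (LTSact G).simN m) →
      ∀ T, (GTerm.subst σ T, GTerm.subst τ T) ∈ (LTSact G).simN m)
    (σ τ : ℕ → GTerm G.sig) (hστ : ∀ j, (σ j, τ j) ∈ (LTSact G).simN m)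
    {A : Fin G.sig.ntCount} (c : Fin (G.sig.arity A) → GTerm G.sig) :
    ∀ a U, (LTSact G).Tr a (GTerm.subst σ (GTerm.app A c)) U →
      ∃ V, (LTSact G).Tr a (GTerm.subst τ (GTerm.app A c)) V ∧ (U, V) ∈ (LTSact G).simN m := by
  intro a U hU
  rw [subst_app] at hU
  match a with
  | Sum.inr n => exact absurd hU.1.symm var_ne_app
  | Sum.inl a =>
    obtain ⟨r, hmem, hact, hnt, ρ, hfs, hρ, rfl⟩ := tr_app_inl hU
    subst hnt
    subst hact
    set ρσ : ℕ → GTerm G.sig :=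
      fun j => if h : j < G.sig.arity r.nt then GTerm.subst σ (c ⟨j, h⟩) else GTerm.var G.sig j
      with hρσ
    set ρτ : ℕ → GTerm G.sig :=
      fun j => if h : j < G.sig.arity r.nt then GTerm.subst τ (c ⟨j, h⟩) else GTerm.var G.sig j
      with hρτ
    have hfsτ : FinSupp ρτ := by
      apply Set.Finite.subset (Set.finite_Iio (G.sig.arity r.nt))
      intro n hn
      by_contra hlt
      simp only [Set.mem_Iio] at hlt
      exact hn (by simp only [hρτ, dif_neg hlt])
    have hUeq : GTerm.subst ρ r.rhs.toTerm = GTerm.subst ρσ r.rhs.toTerm := by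
      apply ftsubst_congr
      intro n hn
      have hlt := r.rhs_wf n hn
      have := hρ ⟨n, hlt⟩
      simp only [hρσ, dif_pos hlt]
      exact this
    refine ⟨GTerm.subst ρτ r.rhs.toTerm, ?_, ?_⟩
    · rw [subst_app]
      have : (fun i => GTerm.subst τ (c i)) = fun j : Fin (G.sig.arity r.nt) => ρτ j.val := by
        funext j
        simp only [hρτ, dif_pos j.isLt]
      rw [this]
      exact tr_app_of r hmem ρτ hfsτ
    · rw [hUeq]
      apply hcong
      intro j
      by_cases hj : j < G.sig.arity r.nt
      · simp only [hρσ, hρτ, dif_pos hj]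
        exact hcong σ τ hστ (c ⟨j, hj⟩)
      · simp only [hρσ, hρτ, dif_neg hj]
        exact (LTSact G).simN_refl m _

theorem subst_cong (G : FOGrammar) : ∀ (m : ℕ) (σ τ : ℕ → GTerm G.sig),
    (∀ j, (σ j, τ j) ∈ (LTSact G).simN m) →
    ∀ T, (GTerm.subst σ T, GTerm.subst τ T) ∈ (LTSact G).simN m := by
  intro m
  induction m with
  | zero => exact fun σ τ _ T => Set.mem_univ _
  | succ m ih =>
    intro σ τ h T
    rcases term_cases T with ⟨n, rfl⟩ | ⟨A, c, rfl⟩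
    · rw [subst_var, subst_var]
      exact h n
    · have hm : ∀ j, (σ j, τ j) ∈ (LTSact G).simN m := fun j => (LTSact G).simN_mono m (h j)
      refine ⟨fun a U hU => covers_half m ih σ τ hm c a U hU, fun a V hV => ?_⟩
      obtain ⟨U, hU, hUV⟩ := covers_half m ih τ σ (fun j => (LTSact G).simN_symm m (hm j)) c a V hV
      exact ⟨U, hU, (LTSact G).simN_symm m hUV⟩

theorem subst_cong_succ (G : FOGrammar) (m : ℕ) (σ τ : ℕ → GTerm G.sig)
    (h : ∀ j, (σ j, τ j) ∈ (LTSact G).simN m)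
    {A : Fin G.sig.ntCount} (c : Fin (G.sig.arity A) → GTerm G.sig) :
    (GTerm.subst σ (GTerm.app A c), GTerm.subst τ (GTerm.app A c)) ∈ (LTSact G).simN (m + 1) := by
  refine ⟨fun a U hU => covers_half m (subst_cong G m) σ τ h c a U hU, fun a V hV => ?_⟩
  obtain ⟨U, hU, hUV⟩ :=
    covers_half m (subst_cong G m) τ σ (fun j => (LTSact G).simN_symm m (h j)) c a V hV
  exact ⟨U, hU, (LTSact G).simN_symm m hUV⟩

end Grammar
/-- let `H ≠ x_i` and let `H'` be the (unique) term in which `x_i` does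
not occur and with `H' = H{(x_i ↦ H')}` (the limit `H{(x_i,H)}{(x_i,H)}⋯`). Then for
every substitution `σ`: `eqlevel(x_iσ, Hσ) = eqlevel(x_iσ, H'σ)` in `L^act_G`. -/
theorem eqlevel_limit_subst (G : FOGrammar) (i : ℕ) (H H' : GTerm G.sig)
    (hH : H ≠ GTerm.var G.sig i)
    (hocc : ¬ VarOccurs G.sig i H')
    (hfix : H' = GTerm.subst (singleSub i H') H) :
    ∀ σ : ℕ → GTerm G.sig, FinSupp σ →
      (LTSact G).eqlevel (σ i) (GTerm.subst σ H) =
        (LTSact G).eqlevel (σ i) (GTerm.subst σ H') := by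
  intro σ hσ
  rcases GTerm.term_cases H with ⟨n, rfl⟩ | ⟨A, c, rfl⟩
  · -- H is a variable x_n, n ≠ i, hence H' = H
    have hni : n ≠ i := fun h => hH (by rw [h])
    have hH' : H' = GTerm.var G.sig n := by
      rw [hfix, GTerm.subst_var]
      simp [singleSub, hni]
    rw [hH']
  · -- H = A(c)
    set τ : ℕ → GTerm G.sig :=
      fun j => if j = i then GTerm.subst σ H' else σ j with hτ
    have key : GTerm.subst τ (GTerm.app A c) = GTerm.subst σ H' := by
      conv_rhs => rw [hfix]
      rw [GTerm.subst_comp]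
      apply GTerm.subst_congr
      intro n _
      simp only [hτ, singleSub]
      by_cases hn : n = i
      · simp [hn]
      · simp [hn, GTerm.subst_var]
    apply (LTSact G).eqlevel_congr
    intro k
    induction k with
    | zero => simp [LTS.simN]
    | succ m ih =>
      have hστ : (σ i, GTerm.subst σ H') ∈ (LTSact G).simN m →
          ∀ j, (σ j, τ j) ∈ (LTSact G).simN m := by
        intro hm j
        by_cases hj : j = i
        · subst hj; simpa [hτ] using hm
        · simp only [hτ, if_neg hj]
          exact (LTSact G).simN_refl m _
      have hcs : (σ i, GTerm.subst σ H') ∈ (LTSact G).simN m →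
          (GTerm.subst σ (GTerm.app A c), GTerm.subst σ H') ∈ (LTSact G).simN (m + 1) := by
        intro hm
        rw [← key]
        exact subst_cong_succ G m σ τ (hστ hm) c
      constructor
      · intro h
        have hm : (σ i, GTerm.subst σ H') ∈ (LTSact G).simN m :=
          ih.mp ((LTSact G).simN_mono m h)
        exact (LTSact G).simN_trans (m + 1) h (hcs hm)
      · intro h
        have hm : (σ i, GTerm.subst σ H') ∈ (LTSact G).simN m := (LTSact G).simN_mono m h
        exact (LTSact G).simN_trans (m + 1) h ((LTSact G).simN_symm (m + 1) (hcs hm))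
end

section
/- Let G = (N, Act, R) be a first-order grammar, let σ be a substitution, x_i a variable, H a term with H ≠ x_i, and k ∈ ℕ, and suppose x_iσ ∼_k Hσ in L^act_G. Let H' be the unique term such that x_i does not occur in H' and H' = H{(x_i ↦ H')}, and let σ∖x_i denote the substitution equal to σ except that (σ∖x_i)(x_i) = x_i. Then σ ∼_k {(x_i ↦ H')}(σ∖x_i); equivalently, x_iσ ∼_k H'σ, and x_jσ = x_j({(x_i ↦ H')}(σ∖x_i)) for all j ≠ i. -/
/-- The substitution `σ∖x_i`, equal to `σ` except that it leaves `x_i` unchanged. -/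
def remSub {S : GrammarSig} (σ : ℕ → GTerm S) (i : ℕ) : ℕ → GTerm S :=
  fun j => if j = i then GTerm.var S j else σ j
section Aux

variable {S : GrammarSig}

/-- The corecursion step function used in `GTerm.subst`. -/
def sF (σ : ℕ → GTerm S) : Bool × GTerm S → (S.P).Obj (Bool × GTerm S) := fun st =>
  match PFunctor.M.dest st.2 with
  | ⟨Sum.inl A, c⟩ => ⟨Sum.inl A, fun i => (st.1, c i)⟩
  | ⟨Sum.inr n, _⟩ =>
    if st.1 then
      ⟨(PFunctor.M.dest (σ n)).1, fun i => (false, (PFunctor.M.dest (σ n)).2 i)⟩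
    else ⟨Sum.inr n, fun e => e.elim⟩

lemma subst_def (σ : ℕ → GTerm S) (T : GTerm S) :
    GTerm.subst σ T = PFunctor.M.corec (sF σ) (true, T) := rfl

lemma sF_app (σ : ℕ → GTerm S) (b : Bool) (T : GTerm S) (A : Fin S.ntCount)
    (c : (S.P).B (Sum.inl A) → GTerm S) (h : PFunctor.M.dest T = ⟨Sum.inl A, c⟩) :
    sF σ (b, T) = ⟨Sum.inl A, fun i => (b, c i)⟩ := by
  simp only [sF]
  rw [h]

lemma sF_var (σ : ℕ → GTerm S) (b : Bool) (T : GTerm S) (n : ℕ)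
    (f : (S.P).B (Sum.inr n) → GTerm S) (h : PFunctor.M.dest T = ⟨Sum.inr n, f⟩) :
    sF σ (b, T) = if b then
      ⟨(PFunctor.M.dest (σ n)).1, fun i => (false, (PFunctor.M.dest (σ n)).2 i)⟩
    else ⟨Sum.inr n, fun e => e.elim⟩ := by
  simp only [sF]
  rw [h]

lemma corec_false (σ : ℕ → GTerm S) (T : GTerm S) :
    PFunctor.M.corec (sF σ) (false, T) = T := by
  apply PFunctor.M.bisim (fun x y => x = PFunctor.M.corec (sF σ) (false, y))
  · intro x y hxy
    rcases hd : PFunctor.M.dest y with ⟨A | n, f⟩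
    · refine ⟨Sum.inl A, fun i => PFunctor.M.corec (sF σ) (false, f i), f, ?_, rfl, fun i => rfl⟩
      erw [hxy, PFunctor.M.dest_corec, sF_app σ false y A f hd, PFunctor.map_eq]
      rfl
    · refine ⟨Sum.inr n, fun e => (e : Empty).elim, f, ?_, rfl, fun e => (e : Empty).elim⟩
      erw [hxy, PFunctor.M.dest_corec, sF_var σ false y n f hd, if_neg Bool.false_ne_true,
        PFunctor.map_eq]
      congr 1
      funext e
      exact (e : Empty).elim
  · rfl

lemma subst_var (σ : ℕ → GTerm S) (n : ℕ) :
    GTerm.subst σ (GTerm.var S n) = σ n := by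
  have hd : PFunctor.M.dest (GTerm.var S n) = ⟨Sum.inr n, fun e => (e : Empty).elim⟩ :=
    PFunctor.M.dest_mk _
  have h1 : PFunctor.M.dest (GTerm.subst σ (GTerm.var S n)) = PFunctor.M.dest (σ n) := by
    rw [subst_def, PFunctor.M.dest_corec, sF_var σ true _ n _ hd]
    simp only [if_pos]
    erw [PFunctor.map_eq]
    rcases hσ : PFunctor.M.dest (σ n) with ⟨a, g⟩
    congr 1
    funext i
    exact corec_false σ (g i)
  erw [← PFunctor.M.mk_dest (GTerm.subst σ (GTerm.var S n)), h1, PFunctor.M.mk_dest]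

lemma subst_app (σ : ℕ → GTerm S) (A : Fin S.ntCount) (c : Fin (S.arity A) → GTerm S) :
    GTerm.subst σ (GTerm.app A c) = GTerm.app A fun i => GTerm.subst σ (c i) := by
  have hd : PFunctor.M.dest (GTerm.app A c) = ⟨Sum.inl A, c⟩ := PFunctor.M.dest_mk _
  have h1 : PFunctor.M.dest (GTerm.subst σ (GTerm.app A c)) =
      ⟨Sum.inl A, fun i => GTerm.subst σ (c i)⟩ := by
    erw [subst_def, PFunctor.M.dest_corec, sF_app σ true _ A c hd, PFunctor.map_eq]
    rfl
  rw [← PFunctor.M.mk_dest (GTerm.subst σ (GTerm.app A c)), h1]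
  rfl

lemma cases_term (T : GTerm S) :
    (∃ n, T = GTerm.var S n) ∨ ∃ A c, T = GTerm.app A c := by
  rcases hd : PFunctor.M.dest T with ⟨A | n, f⟩
  · right
    exact ⟨A, f, by rw [← PFunctor.M.mk_dest T, hd]; rfl⟩
  · left
    refine ⟨n, ?_⟩
    rw [← PFunctor.M.mk_dest T, hd]
    unfold GTerm.var
    congr 1
    erw [Sigma.mk.inj_iff]
    refine ⟨rfl, heq_of_eq ?_⟩
    funext e
    exact (e : Empty).elim

lemma var_ne_app (n : ℕ) (A : Fin S.ntCount) (c : Fin (S.arity A) → GTerm S) :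
    GTerm.var S n ≠ GTerm.app A c := by
  intro h
  have := congrArg PFunctor.M.dest h
  erw [GTerm.var, GTerm.app, PFunctor.M.dest_mk, PFunctor.M.dest_mk, Sigma.mk.inj_iff] at this
  exact Sum.inr_ne_inl this.1

lemma app_inj {A A' : Fin S.ntCount} {c : Fin (S.arity A) → GTerm S}
    {c' : Fin (S.arity A') → GTerm S} (h : GTerm.app A c = GTerm.app A' c') :
    ∃ _ : A = A', HEq c c' := by
  have := congrArg PFunctor.M.dest h
  erw [GTerm.app, GTerm.app, PFunctor.M.dest_mk, PFunctor.M.dest_mk, Sigma.mk.inj_iff] at this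
  exact ⟨Sum.inl.inj this.1, this.2⟩

lemma subst_comp (σ ρ : ℕ → GTerm S) (T : GTerm S) :
    GTerm.subst σ (GTerm.subst ρ T) = GTerm.subst (fun n => GTerm.subst σ (ρ n)) T := by
  apply PFunctor.M.bisim (fun x y =>
    (∃ T, x = GTerm.subst σ (GTerm.subst ρ T) ∧
      y = GTerm.subst (fun n => GTerm.subst σ (ρ n)) T) ∨ x = y)
  · intro x y hxy
    have refl_case : ∀ z : GTerm S, ∃ a f f',
        PFunctor.M.dest z = ⟨a, f⟩ ∧ PFunctor.M.dest z = ⟨a, f'⟩ ∧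
        ∀ i, (∃ T, f i = GTerm.subst σ (GTerm.subst ρ T) ∧
          f' i = GTerm.subst (fun n => GTerm.subst σ (ρ n)) T) ∨ f i = f' i := by
      intro z
      rcases hz : PFunctor.M.dest z with ⟨a, f⟩
      exact ⟨a, f, f, rfl, rfl, fun i => Or.inr rfl⟩
    rcases hxy with ⟨T, hx, hy⟩ | rfl
    · rcases cases_term T with ⟨n, rfl⟩ | ⟨A, c, rfl⟩
      · rw [subst_var] at hx
        rw [subst_var] at hy
        subst hx; subst hy
        exact refl_case _
      · rw [subst_app, subst_app] at hx
        rw [subst_app] at hy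
        subst hx; subst hy
        refine ⟨Sum.inl A, _, _, PFunctor.M.dest_mk _, PFunctor.M.dest_mk _, fun i => ?_⟩
        exact Or.inl ⟨c i, rfl, rfl⟩
    · exact refl_case x
  · exact Or.inl ⟨T, rfl, rfl⟩

lemma subst_agree (σ τ : ℕ → GTerm S) (E : FTerm S)
    (h : ∀ n, E.VOccurs n → σ n = τ n) :
    GTerm.subst σ E.toTerm = GTerm.subst τ E.toTerm := by
  induction E with
  | var n =>
    simp only [FTerm.toTerm, subst_var]
    exact h n rfl
  | app A c ih =>
    simp only [FTerm.toTerm, subst_app]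
    congr 1
    funext i
    exact ih i fun n hn => h n ⟨i, hn⟩

lemma subst_lhs (ρ : ℕ → GTerm S) (A : Fin S.ntCount) :
    GTerm.subst ρ (lhsTerm A) = GTerm.app A fun i => ρ i.val := by
  rw [lhsTerm, subst_app]
  congr 1
  funext i
  exact subst_var ρ i.val

end Aux
section SimLemmas

variable {St A : Type*}

lemma simN_refl (L : LTS St A) : ∀ (k : ℕ) (s : St), (s, s) ∈ L.simN k := by
  intro k
  induction k with
  | zero => intro s; trivial
  | succ k ih =>
    intro s
    exact ⟨fun a s' h => ⟨s', h, ih s'⟩, fun a t' h => ⟨t', h, ih t'⟩⟩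

lemma simN_symm (L : LTS St A) : ∀ (k : ℕ) (s t : St),
    (s, t) ∈ L.simN k → (t, s) ∈ L.simN k := by
  intro k
  induction k with
  | zero => intro s t _; trivial
  | succ k ih =>
    intro s t h
    exact ⟨fun a t' htr => (h.2 a t' htr).imp fun s' ⟨h1, h2⟩ => ⟨h1, ih _ _ h2⟩,
      fun a s' htr => (h.1 a s' htr).imp fun t' ⟨h1, h2⟩ => ⟨h1, ih _ _ h2⟩⟩

lemma simN_trans (L : LTS St A) : ∀ (k : ℕ) (s t u : St),
    (s, t) ∈ L.simN k → (t, u) ∈ L.simN k → (s, u) ∈ L.simN k := by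
  intro k
  induction k with
  | zero => intro s t u _ _; trivial
  | succ k ih =>
    intro s t u h1 h2
    constructor
    · intro a s' htr
      obtain ⟨t', htr', hb1⟩ := h1.1 a s' htr
      obtain ⟨u', htr'', hb2⟩ := h2.1 a t' htr'
      exact ⟨u', htr'', ih _ _ _ hb1 hb2⟩
    · intro a u' htr
      obtain ⟨t', htr', hb2⟩ := h2.2 a u' htr
      obtain ⟨s', htr'', hb1⟩ := h1.2 a t' htr'
      exact ⟨s', htr'', ih _ _ _ hb1 hb2⟩

lemma simN_anti (L : LTS St A) : ∀ k : ℕ, L.simN (k + 1) ⊆ L.simN k := by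
  intro k
  induction k with
  | zero => intro p _; trivial
  | succ k ih =>
    intro p hp
    exact ⟨fun a s' h => (hp.1 a s' h).imp fun t' ⟨h1, h2⟩ => ⟨h1, ih h2⟩,
      fun a t' h => (hp.2 a t' h).imp fun s' ⟨h1, h2⟩ => ⟨h1, ih h2⟩⟩

lemma simN_le (L : LTS St A) {j k : ℕ} (h : j ≤ k) : L.simN k ⊆ L.simN j := by
  induction k with
  | zero =>
    obtain rfl : j = 0 := Nat.le_zero.mp h
    exact subset_rfl
  | succ k ih =>
    rcases Nat.eq_or_lt_of_le h with rfl | hlt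
    · exact subset_rfl
    · exact fun p hp => ih (Nat.lt_succ_iff.mp hlt) (simN_anti L k hp)

end SimLemmas

section GrammarLemmas

variable (G : FOGrammar)

lemma trans_match (m : ℕ) (σ τ : ℕ → GTerm G.sig)
    (hB : ∀ T, (GTerm.subst σ T, GTerm.subst τ T) ∈ (LTSact G).simN m)
    (A : Fin G.sig.ntCount) (c : Fin (G.sig.arity A) → GTerm G.sig) :
    ∀ a T', (LTSact G).Tr a (GTerm.subst σ (GTerm.app A c)) T' →
      ∃ T'', (LTSact G).Tr a (GTerm.subst τ (GTerm.app A c)) T'' ∧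
        (T', T'') ∈ (LTSact G).simN m := by
  intro a T' htr
  cases a with
  | inr n =>
    exfalso
    have h1 : GTerm.subst σ (GTerm.app A c) = GTerm.var G.sig n := htr.1
    rw [subst_app] at h1
    exact var_ne_app n A _ h1.symm
  | inl a =>
    obtain ⟨r, hract, hrmem, ρ, hρfin, hlhs, hrhs⟩ := htr
    rw [subst_app, subst_lhs] at hlhs
    obtain ⟨h1, h2⟩ := app_inj hlhs
    subst h1
    have h2' : (fun i => GTerm.subst σ (c i)) = fun i : Fin (G.sig.arity r.nt) => ρ i.val :=
      eq_of_heq h2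
    have hρval : ∀ (i : Fin (G.sig.arity r.nt)), ρ i.val = GTerm.subst σ (c i) :=
      fun i => (congrFun h2' i).symm
    classical
    set ρ' : ℕ → GTerm G.sig := fun n =>
      if h : n < G.sig.arity r.nt then GTerm.subst τ (c ⟨n, h⟩) else GTerm.var G.sig n with hρ'
    have hρ'fin : FinSupp ρ' := by
      apply Set.Finite.subset (Set.finite_Iio (G.sig.arity r.nt))
      intro n hn
      rw [Set.mem_Iio]
      by_contra hcon
      exact hn (dif_neg hcon)
    set μ : ℕ → GTerm G.sig := fun n =>
      if h : n < G.sig.arity r.nt then c ⟨n, h⟩ else GTerm.var G.sig n with hμ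
    set F : GTerm G.sig := GTerm.subst μ r.rhs.toTerm with hF
    have claim1 : GTerm.subst ρ r.rhs.toTerm = GTerm.subst σ F := by
      rw [hF, subst_comp]
      apply subst_agree
      intro n hn
      have hlt := r.rhs_wf n hn
      simp only [hμ, dif_pos hlt]
      exact hρval ⟨n, hlt⟩
    have claim2 : GTerm.subst ρ' r.rhs.toTerm = GTerm.subst τ F := by
      rw [hF, subst_comp]
      apply subst_agree
      intro n hn
      have hlt := r.rhs_wf n hn
      simp only [hρ', hμ, dif_pos hlt]
    refine ⟨GTerm.subst ρ' r.rhs.toTerm, ⟨r, hract, hrmem, ρ', hρ'fin, ?_, rfl⟩, ?_⟩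
    · rw [subst_app, subst_lhs]
      congr 1
      funext i
      simp only [hρ', dif_pos i.isLt]
    · rw [hrhs, claim1, claim2]
      exact hB F

lemma coverApp (m : ℕ) (σ τ : ℕ → GTerm G.sig)
    (hB : ∀ T, (GTerm.subst σ T, GTerm.subst τ T) ∈ (LTSact G).simN m)
    (A : Fin G.sig.ntCount) (c : Fin (G.sig.arity A) → GTerm G.sig) :
    (GTerm.subst σ (GTerm.app A c), GTerm.subst τ (GTerm.app A c)) ∈ (LTSact G).simN (m + 1) := by
  have hB' : ∀ T, (GTerm.subst τ T, GTerm.subst σ T) ∈ (LTSact G).simN m :=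
    fun T => simN_symm _ _ _ _ (hB T)
  constructor
  · intro a s' h
    exact trans_match G m σ τ hB A c a s' h
  · intro a t' h
    obtain ⟨T'', htr, hm⟩ := trans_match G m τ σ hB' A c a t' h
    exact ⟨T'', htr, simN_symm _ _ _ _ hm⟩

lemma congrB : ∀ (m : ℕ) (σ τ : ℕ → GTerm G.sig),
    (∀ n, (σ n, τ n) ∈ (LTSact G).simN m) →
    ∀ T, (GTerm.subst σ T, GTerm.subst τ T) ∈ (LTSact G).simN m := by
  intro m
  induction m with
  | zero => intro _ _ _ _; trivial
  | succ m ih =>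
    intro σ τ h T
    rcases cases_term T with ⟨n, rfl⟩ | ⟨A, c, rfl⟩
    · rw [subst_var, subst_var]
      exact h n
    · exact coverApp G m σ τ (ih σ τ fun n => simN_anti _ m (h n)) A c

end GrammarLemmas

/-- if `x_iσ ∼_k Hσ` with `H ≠ x_i`, and `H'` is the (unique) term in
which `x_i` does not occur and with `H' = H{(x_i ↦ H')}`, then
`σ ∼_k {(x_i ↦ H')}(σ∖x_i)` (the composed substitution `x ↦ (x{(x_i ↦ H')})(σ∖x_i)`). -/
theorem sim_single_limit_subst (G : FOGrammar) (σ : ℕ → GTerm G.sig)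
    (hσ : FinSupp σ) (i : ℕ) (H H' : GTerm G.sig) (k : ℕ)
    (hH : H ≠ GTerm.var G.sig i)
    (hsim : (σ i, GTerm.subst σ H) ∈ (LTSact G).simN k)
    (hocc : ¬ VarOccurs G.sig i H')
    (hfix : H' = GTerm.subst (singleSub i H') H) :
    ∀ n : ℕ, (σ n, GTerm.subst (remSub σ i) (singleSub i H' n)) ∈ (LTSact G).simN k := by
  classical
  have hτeq : (fun n => GTerm.subst (remSub σ i) (singleSub i H' n)) =
      (fun n => if n = i then GTerm.subst (remSub σ i) H' else σ n) := by
    funext n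
    by_cases hn : n = i
    · simp only [singleSub, if_pos hn]
    · simp only [singleSub, if_neg hn, subst_var, remSub]
  have hT : GTerm.subst (remSub σ i) H' =
      GTerm.subst (fun n => if n = i then GTerm.subst (remSub σ i) H' else σ n) H := by
    conv_lhs => rw [hfix]
    rw [subst_comp, hτeq]
  have key : ∀ m, m ≤ k → (σ i, GTerm.subst (remSub σ i) H') ∈ (LTSact G).simN m := by
    intro m
    induction m with
    | zero => intro _; trivial
    | succ m ih =>
      intro hle
      have hm : (σ i, GTerm.subst (remSub σ i) H') ∈ (LTSact G).simN m :=
        ih (Nat.le_of_succ_le hle)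
      have hτm : ∀ n, (σ n, (fun n => if n = i then GTerm.subst (remSub σ i) H' else σ n) n)
          ∈ (LTSact G).simN m := by
        intro n
        by_cases hn : n = i
        · subst hn
          simpa only [if_pos rfl, ↓reduceIte] using hm
        · simp only [if_neg hn]
          exact simN_refl _ m (σ n)
      have h1 : (σ i, GTerm.subst σ H) ∈ (LTSact G).simN (m + 1) :=
        simN_le (LTSact G) hle hsim
      rcases cases_term H with ⟨j, rfl⟩ | ⟨A, c, rfl⟩
      · have hji : j ≠ i := fun e => hH (by rw [e])
        rw [subst_var] at h1
        have hTj : GTerm.subst (remSub σ i) H' = σ j := by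
          rw [hT, subst_var, if_neg hji]
        rw [hTj]
        exact h1
      · have h2 := coverApp G m σ
          (fun n => if n = i then GTerm.subst (remSub σ i) H' else σ n)
          (congrB G m σ _ hτm) A c
        rw [← hT] at h2
        exact simN_trans _ _ _ _ _ h1 h2
  intro n
  by_cases hn : n = i
  · subst hn
    simpa only [singleSub, if_pos rfl, ↓reduceIte] using key k le_rfl
  · simp only [singleSub, if_neg hn, subst_var, remSub]
    exact simN_refl _ k (σ n)
end

section
/- Let G = (N, Act, R) be a first-order grammar and b ∈ ℕ. Then there exists m ∈ ℕ such that every pair (E,F) of regular terms over N with pressize(E) + pressize(F) ≤ b and E ≁ F (E not bisimilar with F in L^act_G) satisfies eqlevel(E,F) ≤ m. (In other words, MaxEqLev(Size_{≤b} ∩ ≁) is a finite number.) -/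
/-! ### Auxiliary lemmas -/

namespace Aux

open PFunctor

variable {S : GrammarSig}

/-- The stepping function used in `GTerm.subst`. -/
def sStep (σ : ℕ → GTerm S) : Bool × GTerm S → S.P.Obj (Bool × GTerm S) :=
  fun st =>
    match PFunctor.M.dest st.2 with
    | ⟨Sum.inl A, c⟩ => ⟨Sum.inl A, fun i => (st.1, c i)⟩
    | ⟨Sum.inr n, _⟩ =>
      if st.1 then
        ⟨(PFunctor.M.dest (σ n)).1, fun i => (false, (PFunctor.M.dest (σ n)).2 i)⟩
      else ⟨Sum.inr n, fun e => e.elim⟩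

theorem subst_eq_corec (σ : ℕ → GTerm S) (T : GTerm S) :
    GTerm.subst σ T = PFunctor.M.corec (sStep σ) (true, T) := rfl

theorem dest_var (n : ℕ) :
    PFunctor.M.dest (GTerm.var S n) = ⟨Sum.inr n, fun e => e.elim⟩ :=
  PFunctor.M.dest_mk _

theorem dest_app (A : Fin S.ntCount) (c : Fin (S.arity A) → GTerm S) :
    PFunctor.M.dest (GTerm.app A c) = ⟨Sum.inl A, c⟩ :=
  PFunctor.M.dest_mk _

theorem sStep_var_false (σ : ℕ → GTerm S) (n : ℕ) :
    sStep σ (false, GTerm.var S n) = ⟨Sum.inr n, fun e => e.elim⟩ := by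
  unfold sStep; rw [dest_var]; rfl

theorem sStep_var_true (σ : ℕ → GTerm S) (n : ℕ) :
    sStep σ (true, GTerm.var S n)
      = ⟨(PFunctor.M.dest (σ n)).1, fun i => (false, (PFunctor.M.dest (σ n)).2 i)⟩ := by
  unfold sStep; rw [dest_var]; rfl

theorem sStep_app (σ : ℕ → GTerm S) (b : Bool) (A : Fin S.ntCount)
    (c : Fin (S.arity A) → GTerm S) :
    sStep σ (b, GTerm.app A c) = ⟨Sum.inl A, fun i => (b, c i)⟩ := by
  unfold sStep; rw [dest_app]

theorem gterm_cases (T : GTerm S) : (∃ n, T = GTerm.var S n) ∨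
    (∃ (A : Fin S.ntCount) (c : Fin (S.arity A) → GTerm S), T = GTerm.app A c) := by
  have h := (PFunctor.M.mk_dest (F := S.P) T).symm
  rcases hd : PFunctor.M.dest (F := S.P) T with ⟨l, f⟩
  rw [hd] at h
  cases l with
  | inl A => exact Or.inr ⟨A, f, h⟩
  | inr n =>
    refine Or.inl ⟨n, ?_⟩
    rw [h]; unfold GTerm.var; congr 1; congr 1; funext e; exact e.elim

theorem var_ne_app (n : ℕ) (A : Fin S.ntCount) (c : Fin (S.arity A) → GTerm S) :
    GTerm.var S n ≠ GTerm.app A c := by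
  intro h
  have := congrArg PFunctor.M.dest h
  rw [dest_var, dest_app] at this
  have h1 := congrArg Sigma.fst this
  simp at h1

theorem var_inj {n m : ℕ} (h : GTerm.var S n = GTerm.var S m) : n = m := by
  have := congrArg PFunctor.M.dest h
  rw [dest_var, dest_var] at this
  have h1 : Sum.inr (α := Fin S.ntCount) n = Sum.inr m := congrArg Sigma.fst this
  exact Sum.inr.inj h1

theorem app_inj {A B : Fin S.ntCount} {c : Fin (S.arity A) → GTerm S}
    {d : Fin (S.arity B) → GTerm S} (h : GTerm.app A c = GTerm.app B d) :
    A = B ∧ HEq c d := by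
  have := congrArg PFunctor.M.dest h
  rw [dest_app, dest_app] at this
  have h1 : Sum.inl (β := ℕ) A = Sum.inl B := congrArg Sigma.fst this
  have hAB : A = B := by simpa using h1
  subst hAB
  exact ⟨rfl, (Sigma.mk.inj_iff.mp this).2⟩

theorem app_inj' {A : Fin S.ntCount} {c d : Fin (S.arity A) → GTerm S}
    (h : GTerm.app A c = GTerm.app A d) : c = d :=
  eq_of_heq (app_inj h).2

theorem subst_false (σ : ℕ → GTerm S) (T : GTerm S) :
    PFunctor.M.corec (sStep σ) (false, T) = T := by
  apply PFunctor.M.bisim (fun x y => x = PFunctor.M.corec (sStep σ) (false, y))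
  · intro x y hxy
    rcases gterm_cases y with ⟨n, rfl⟩ | ⟨A, c, rfl⟩
    · refine ⟨Sum.inr n, fun e => e.elim, fun e => e.elim, ?_, dest_var n, fun i => i.elim⟩
      rw [hxy, PFunctor.M.dest_corec, sStep_var_false]
      show (⟨Sum.inr n, PFunctor.M.corec (sStep σ) ∘ (fun e => e.elim)⟩ : S.P.Obj _) = _
      congr 1; funext e; exact e.elim
    · refine ⟨Sum.inl A, fun i => PFunctor.M.corec (sStep σ) (false, c i), c, ?_,
        dest_app A c, fun i => rfl⟩
      rw [hxy, PFunctor.M.dest_corec, sStep_app]; rfl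
  · rfl

theorem subst_var (σ : ℕ → GTerm S) (n : ℕ) :
    GTerm.subst σ (GTerm.var S n) = σ n := by
  have h1 : PFunctor.M.dest (GTerm.subst σ (GTerm.var S n)) = PFunctor.M.dest (σ n) := by
    rw [subst_eq_corec, PFunctor.M.dest_corec, sStep_var_true]
    show (⟨(PFunctor.M.dest (σ n)).1,
      fun i => PFunctor.M.corec (sStep σ) (false, (PFunctor.M.dest (σ n)).2 i)⟩
        : S.P.Obj _) = _
    rcases hd : PFunctor.M.dest (σ n) with ⟨l, f⟩
    show (⟨l, fun i => PFunctor.M.corec (sStep σ) (false, f i)⟩ : S.P.Obj _) = ⟨l, f⟩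
    exact congrArg (fun g => (⟨l, g⟩ : S.P.Obj _)) (funext fun i => subst_false σ (f i))
  exact ((PFunctor.M.mk_dest (GTerm.subst σ (GTerm.var S n))).symm.trans
    (by rw [h1])).trans (PFunctor.M.mk_dest _)

theorem subst_app (σ : ℕ → GTerm S) (A : Fin S.ntCount) (c : Fin (S.arity A) → GTerm S) :
    GTerm.subst σ (GTerm.app A c) = GTerm.app A (fun i => GTerm.subst σ (c i)) := by
  have h1 : PFunctor.M.dest (GTerm.subst σ (GTerm.app A c))
      = ⟨Sum.inl A, fun i => GTerm.subst σ (c i)⟩ := by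
    rw [subst_eq_corec, PFunctor.M.dest_corec, sStep_app]; rfl
  exact (PFunctor.M.mk_dest (GTerm.subst σ (GTerm.app A c))).symm.trans
    (by rw [h1]; rfl)


theorem diag_children (y : GTerm S) (R : GTerm S → GTerm S → Prop)
    (hR : ∀ z, R z z) :
    ∃ (a : S.P.A) (f f' : S.P.B a → PFunctor.M S.P),
      PFunctor.M.dest y = ⟨a, f⟩ ∧ PFunctor.M.dest y = ⟨a, f'⟩ ∧ ∀ i, R (f i) (f' i) := by
  rcases hd : PFunctor.M.dest (F := S.P) y with ⟨l, f⟩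
  exact ⟨l, f, f, rfl, rfl, fun i => hR _⟩

theorem subst_id (T : GTerm S) : GTerm.subst (GTerm.var S) T = T := by
  apply PFunctor.M.bisim (fun x y => x = GTerm.subst (GTerm.var S) y ∨ x = y)
  · intro x y hxy
    rcases hxy with h | h
    · rcases gterm_cases y with ⟨n, rfl⟩ | ⟨A, c, rfl⟩
      · rw [subst_var] at h
        subst h
        exact diag_children _ (fun x y => x = GTerm.subst (GTerm.var S) y ∨ x = y)
          (fun z => Or.inr rfl)
      · rw [subst_app] at h
        subst h
        exact ⟨Sum.inl A, _, c, dest_app A _, dest_app A c, fun i => Or.inl rfl⟩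
    · subst h
      exact diag_children _ (fun x y => x = GTerm.subst (GTerm.var S) y ∨ x = y)
        (fun z => Or.inr rfl)
  · exact Or.inl rfl

theorem subst_comp (τ σ : ℕ → GTerm S) (T : GTerm S) :
    GTerm.subst τ (GTerm.subst σ T)
      = GTerm.subst (fun n => GTerm.subst τ (σ n)) T := by
  apply PFunctor.M.bisim (fun x y =>
    (∃ T, x = GTerm.subst τ (GTerm.subst σ T)
        ∧ y = GTerm.subst (fun n => GTerm.subst τ (σ n)) T) ∨ x = y)
  · intro x y hxy
    rcases hxy with ⟨T, hx, hy⟩ | h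
    · rcases gterm_cases T with ⟨n, rfl⟩ | ⟨A, c, rfl⟩
      · rw [subst_var] at hx
        rw [subst_var] at hy
        rw [hx, ← hy]
        exact diag_children _ (fun x y =>
          (∃ T, x = GTerm.subst τ (GTerm.subst σ T)
            ∧ y = GTerm.subst (fun n => GTerm.subst τ (σ n)) T) ∨ x = y)
          (fun z => Or.inr rfl)
      · rw [subst_app, subst_app] at hx
        rw [subst_app] at hy
        subst hx; subst hy
        exact ⟨Sum.inl A, _, _, dest_app A _, dest_app A _,
          fun i => Or.inl ⟨c i, rfl, rfl⟩⟩
    · subst h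
      exact diag_children _ (fun x y =>
        (∃ T, x = GTerm.subst τ (GTerm.subst σ T)
          ∧ y = GTerm.subst (fun n => GTerm.subst τ (σ n)) T) ∨ x = y)
        (fun z => Or.inr rfl)
  · exact Or.inl ⟨T, rfl, rfl⟩

theorem toTerm_var (n : ℕ) : (FTerm.var (S := S) n).toTerm = GTerm.var S n := rfl

theorem toTerm_app (A : Fin S.ntCount) (c : Fin (S.arity A) → FTerm S) :
    (FTerm.app A c).toTerm = GTerm.app A (fun i => (c i).toTerm) := rfl

theorem subst_congr (E : FTerm S) (σ σ' : ℕ → GTerm S)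
    (h : ∀ n, E.VOccurs n → σ n = σ' n) :
    GTerm.subst σ E.toTerm = GTerm.subst σ' E.toTerm := by
  induction E with
  | var m =>
    rw [toTerm_var, subst_var, subst_var]
    exact h m rfl
  | app A c ih =>
    rw [toTerm_app, subst_app, subst_app]
    unfold GTerm.app
    congr 1
    congr 1
    funext i
    exact ih i (fun n hn => h n ⟨i, hn⟩)

theorem subst_lhs (σ : ℕ → GTerm S) (A : Fin S.ntCount) :
    GTerm.subst σ (lhsTerm A) = GTerm.app A (fun i => σ i.val) := by
  unfold lhsTerm
  rw [subst_app]
  unfold GTerm.app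
  congr 1
  congr 1
  funext i
  exact subst_var σ i.val

/-- Extension of a finite family of terms into a substitution. -/
def ext {k : ℕ} (c : Fin k → GTerm S) : ℕ → GTerm S :=
  fun n => if h : n < k then c ⟨n, h⟩ else GTerm.var S n

theorem finSupp_ext {k : ℕ} (c : Fin k → GTerm S) : FinSupp (ext c) := by
  apply Set.Finite.subset (Set.finite_Iio k)
  intro n hn
  by_contra hk
  exact hn (dif_neg (by simpa [Set.mem_Iio] using hk))

theorem tr_rul_iff (G : FOGrammar) (r : GRule G.sig) (T T' : GTerm G.sig) :
    (LTSrul G).Tr r T T' ↔ r ∈ G.rules ∧ ∃ c : Fin (G.sig.arity r.nt) → GTerm G.sig,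
      T = GTerm.app r.nt c ∧ T' = GTerm.subst (ext c) r.rhs.toTerm := by
  constructor
  · rintro ⟨hr, σ, hσ, hT, hT'⟩
    refine ⟨hr, fun i => σ i.val, ?_, ?_⟩
    · rw [hT, subst_lhs]
    · rw [hT']
      apply subst_congr
      intro n hn
      have hlt := r.rhs_wf n hn
      simp [ext, dif_pos hlt]
  · rintro ⟨hr, c, hT, hT'⟩
    refine ⟨hr, ext c, finSupp_ext c, ?_, hT'⟩
    rw [hT, subst_lhs]
    unfold GTerm.app
    congr 1
    congr 1
    funext i
    simp [ext, i.isLt]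

theorem tr_rul_functional (G : FOGrammar) (r : GRule G.sig) (T T1 T2 : GTerm G.sig)
    (h1 : (LTSrul G).Tr r T T1) (h2 : (LTSrul G).Tr r T T2) : T1 = T2 := by
  rw [tr_rul_iff] at h1 h2
  obtain ⟨-, c1, hT1, hT1'⟩ := h1
  obtain ⟨-, c2, hT2, hT2'⟩ := h2
  have : c1 = c2 := app_inj' (hT1 ▸ hT2)
  rw [hT1', hT2', this]

/-- Renaming of variables by a permutation. -/
def ren (π : Equiv.Perm ℕ) (T : GTerm S) : GTerm S :=
  GTerm.subst (fun n => GTerm.var S (π n)) T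

theorem ren_var (π : Equiv.Perm ℕ) (n : ℕ) :
    ren π (GTerm.var S n) = GTerm.var S (π n) := subst_var _ n

theorem ren_app (π : Equiv.Perm ℕ) (A : Fin S.ntCount) (c : Fin (S.arity A) → GTerm S) :
    ren π (GTerm.app A c) = GTerm.app A (fun i => ren π (c i)) := subst_app _ A c

theorem ren_ren (π : Equiv.Perm ℕ) (T : GTerm S) : ren π⁻¹ (ren π T) = T := by
  unfold ren
  rw [subst_comp]
  have : (fun n => GTerm.subst (fun m => GTerm.var S (π⁻¹ m)) (GTerm.var S (π n)))
      = GTerm.var S := by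
    funext n
    rw [subst_var]
    simp
  rw [this, subst_id]

theorem ren_inj (π : Equiv.Perm ℕ) : Function.Injective (ren (S := S) π) :=
  Function.LeftInverse.injective (g := ren π⁻¹) (fun T => ren_ren π T)

theorem tr_rul_ren (G : FOGrammar) (π : Equiv.Perm ℕ) (r : GRule G.sig)
    (T T' : GTerm G.sig) (h : (LTSrul G).Tr r T T') :
    (LTSrul G).Tr r (ren π T) (ren π T') := by
  rw [tr_rul_iff] at h ⊢
  obtain ⟨hr, c, hT, hT'⟩ := h
  refine ⟨hr, fun i => ren π (c i), ?_, ?_⟩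
  · rw [hT, ren_app]
  · rw [hT']
    unfold ren
    rw [subst_comp]
    apply subst_congr
    intro n hn
    have hlt := r.rhs_wf n hn
    simp only [ext, dif_pos hlt]

theorem tr_act_ren_inl (G : FOGrammar) (π : Equiv.Perm ℕ) (a : Fin G.sig.actCount)
    (T T' : GTerm G.sig) (h : (LTSact G).Tr (Sum.inl a) T T') :
    (LTSact G).Tr (Sum.inl a) (ren π T) (ren π T') := by
  obtain ⟨r, hra, hr⟩ := h
  exact ⟨r, hra, tr_rul_ren G π r T T' hr⟩

theorem tr_act_ren_inr (G : FOGrammar) (π : Equiv.Perm ℕ) (n : ℕ)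
    (T T' : GTerm G.sig) (h : (LTSact G).Tr (Sum.inr n) T T') :
    (LTSact G).Tr (Sum.inr (π n)) (ren π T) (ren π T') := by
  obtain ⟨hT, hT'⟩ := h
  exact ⟨by rw [hT]; exact ren_var π n, by rw [hT']; exact ren_var π n⟩


/-! ### Generic LTS lemmas -/

section LTSLemmas

variable {St A : Type*}

theorem covers_mono (L : LTS St A) {B B' : Set (St × St)} (h : B ⊆ B') {p : St × St}
    (hp : L.Covers B p) : L.Covers B' p := by
  obtain ⟨h1, h2⟩ := hp
  constructor
  · intro a s' hs'
    obtain ⟨t', ht', hm⟩ := h1 a s' hs'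
    exact ⟨t', ht', h hm⟩
  · intro a t' ht'
    obtain ⟨s', hs', hm⟩ := h2 a t' ht'
    exact ⟨s', hs', h hm⟩

theorem simN_succ_subset (L : LTS St A) : ∀ k, L.simN (k + 1) ⊆ L.simN k := by
  intro k
  induction k with
  | zero => intro p _; trivial
  | succ k ih => intro p hp; exact covers_mono L ih hp

theorem simN_antitone (L : LTS St A) {j k : ℕ} (h : j ≤ k) : L.simN k ⊆ L.simN j := by
  induction h with
  | refl => exact le_refl _
  | step h ih => exact fun p hp => ih (simN_succ_subset L _ hp)

theorem eqlevel_le_of_not_simN (L : LTS St A) {s t : St} {k : ℕ}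
    (h : (s, t) ∉ L.simN k) : L.eqlevel s t ≤ (k : ℕ∞) := by
  apply sSup_le
  rintro e ⟨j, rfl, hj⟩
  have hjk : j ≤ k := by
    by_contra hc
    exact h (simN_antitone L (le_of_not_ge hc) hj)
  exact_mod_cast hjk

theorem eqlevel_le_iff_mem (L : LTS St A) {s t s' t' : St}
    (h : ∀ k : ℕ, (s, t) ∈ L.simN k ↔ (s', t') ∈ L.simN k) :
    L.eqlevel s t = L.eqlevel s' t' := by
  unfold LTS.eqlevel
  congr 1
  ext e
  constructor
  · rintro ⟨k, rfl, hk⟩; exact ⟨k, rfl, (h k).1 hk⟩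
  · rintro ⟨k, rfl, hk⟩; exact ⟨k, rfl, (h k).2 hk⟩

/-- The intersection of all stratified equivalences is a bisimulation when the LTS
is image-finite. -/
theorem inter_simN_bisimulation (L : LTS St A) (hIF : L.ImageFinite) :
    L.Bisimulation {p | ∀ k, p ∈ L.simN k} := by
  intro p hp
  have key : ∀ (s t : St), (∀ k, (s, t) ∈ L.simN k) →
      ∀ a s', L.Tr a s s' → ∃ t', L.Tr a t t' ∧ ∀ k, (s', t') ∈ L.simN k := by
    intro s t hst a s' hs'
    have hch : ∀ k : ℕ, ∃ t', L.Tr a t t' ∧ (s', t') ∈ L.simN k := by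
      intro k
      have := hst (k + 1)
      exact this.1 a s' hs'
    haveI : Finite {t' | L.Tr a t t'} := (hIF a t).to_subtype
    set f : ℕ → {t' | L.Tr a t t'} :=
      fun k => ⟨(hch k).choose, (hch k).choose_spec.1⟩ with hf
    obtain ⟨t', ht'⟩ := Finite.exists_infinite_fiber f
    refine ⟨t'.val, t'.property, fun k => ?_⟩
    have hinf : (f ⁻¹' {t'}).Infinite := Set.infinite_coe_iff.mp ht'
    obtain ⟨j, hj, hkj⟩ := hinf.exists_gt k
    have hfj : f j = t' := hj
    have : (s', (hch j).choose) ∈ L.simN j := (hch j).choose_spec.2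
    have hval : (hch j).choose = t'.val := congrArg Subtype.val hfj
    rw [hval] at this
    exact simN_antitone L (le_of_lt hkj) this
  have key2 : ∀ (s t : St), (∀ k, (s, t) ∈ L.simN k) →
      ∀ a t', L.Tr a t t' → ∃ s', L.Tr a s s' ∧ ∀ k, (s', t') ∈ L.simN k := by
    intro s t hst a t' ht'
    have hch : ∀ k : ℕ, ∃ s', L.Tr a s s' ∧ (s', t') ∈ L.simN k := by
      intro k
      have := hst (k + 1)
      exact this.2 a t' ht'
    haveI : Finite {s' | L.Tr a s s'} := (hIF a s).to_subtype
    set f : ℕ → {s' | L.Tr a s s'} :=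
      fun k => ⟨(hch k).choose, (hch k).choose_spec.1⟩ with hf
    obtain ⟨s', hs'⟩ := Finite.exists_infinite_fiber f
    refine ⟨s'.val, s'.property, fun k => ?_⟩
    have hinf : (f ⁻¹' {s'}).Infinite := Set.infinite_coe_iff.mp hs'
    obtain ⟨j, hj, hkj⟩ := hinf.exists_gt k
    have hfj : f j = s' := hj
    have : ((hch j).choose, t') ∈ L.simN j := (hch j).choose_spec.2
    have hval : (hch j).choose = s'.val := congrArg Subtype.val hfj
    rw [hval] at this
    exact simN_antitone L (le_of_lt hkj) this
  constructor
  · intro a s' hs'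
    obtain ⟨t', ht', hm⟩ := key p.1 p.2 hp a s' hs'
    exact ⟨t', ht', hm⟩
  · intro a t' ht'
    obtain ⟨s', hs', hm⟩ := key2 p.1 p.2 hp a t' ht'
    exact ⟨s', hs', hm⟩

theorem not_bisim_exists_k (L : LTS St A) (hIF : L.ImageFinite) {s t : St}
    (h : ¬ L.Bisim s t) : ∃ k, (s, t) ∉ L.simN k := by
  by_contra hc
  push_neg at hc
  exact h ⟨{p | ∀ k, p ∈ L.simN k}, inter_simN_bisimulation L hIF, fun k => hc k⟩

end LTSLemmas

/-! ### Image-finiteness of the action LTS -/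

namespace Aux2
open Aux

theorem imageFinite_LTSact (G : FOGrammar) : (LTSact G).ImageFinite := by
  intro a T
  cases a with
  | inr n =>
    apply Set.Finite.subset (Set.finite_singleton (GTerm.var G.sig n))
    rintro T' ⟨-, rfl⟩
    rfl
  | inl a =>
    apply Set.Finite.subset
      (Set.Finite.biUnion (G.rules.finite_toSet)
        (fun r _ => Set.Subsingleton.finite (fun T1 h1 T2 h2 =>
          tr_rul_functional G r T T1 T2 h1 h2)))
    rintro T' ⟨r, hra, hr⟩
    exact Set.mem_biUnion hr.1 hr

/-! ### `simN` is invariant under variable renaming -/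

theorem simN_ren (G : FOGrammar) (π : Equiv.Perm ℕ) :
    ∀ (k : ℕ) (T U : GTerm G.sig), (T, U) ∈ (LTSact G).simN k →
      (ren π T, ren π U) ∈ (LTSact G).simN k := by
  intro k
  induction k with
  | zero => intro T U _; trivial
  | succ k ih =>
    intro T U h
    obtain ⟨h1, h2⟩ := h
    dsimp only at h1 h2
    constructor
    · intro α X hX
      dsimp only at hX
      cases α with
      | inl a =>
        have hback : (LTSact G).Tr (Sum.inl a) T (ren π⁻¹ X) := by
          have := tr_act_ren_inl G π⁻¹ a _ _ hX
          rwa [ren_ren] at this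
        obtain ⟨U', hU', hmem⟩ := h1 (Sum.inl a) _ hback
        refine ⟨ren π U', tr_act_ren_inl G π a _ _ hU', ?_⟩
        have := ih _ _ hmem
        have hXX : ren π (ren π⁻¹ X) = X := by
          have := ren_ren (S := G.sig) π⁻¹ X
          rwa [inv_inv] at this
        rwa [hXX] at this
      | inr n =>
        obtain ⟨hT, hXv⟩ := hX
        have hTv : T = GTerm.var G.sig (π⁻¹ n) := by
          have : ren π⁻¹ (ren π T) = ren π⁻¹ (GTerm.var G.sig n) := by rw [hT]
          rwa [ren_ren, ren_var] at this
        obtain ⟨U', hU', hmem⟩ := h1 (Sum.inr (π⁻¹ n)) T ⟨hTv, hTv⟩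
        obtain ⟨hUv, hU'v⟩ := hU'
        have hrU : ren π U = GTerm.var G.sig n := by
          rw [hUv, ren_var]; simp
        refine ⟨GTerm.var G.sig n, ⟨hrU, rfl⟩, ?_⟩
        have := ih _ _ hmem
        rw [hTv, hU'v, ren_var] at this
        simp only [Equiv.Perm.inv_def, Equiv.apply_symm_apply] at this
        rw [hXv]
        exact this
    · intro α Y hY
      dsimp only at hY
      cases α with
      | inl a =>
        have hback : (LTSact G).Tr (Sum.inl a) U (ren π⁻¹ Y) := by
          have := tr_act_ren_inl G π⁻¹ a _ _ hY
          rwa [ren_ren] at this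
        obtain ⟨T', hT', hmem⟩ := h2 (Sum.inl a) _ hback
        refine ⟨ren π T', tr_act_ren_inl G π a _ _ hT', ?_⟩
        have := ih _ _ hmem
        have hYY : ren π (ren π⁻¹ Y) = Y := by
          have := ren_ren (S := G.sig) π⁻¹ Y
          rwa [inv_inv] at this
        rwa [hYY] at this
      | inr n =>
        obtain ⟨hU, hYv⟩ := hY
        have hUv : U = GTerm.var G.sig (π⁻¹ n) := by
          have : ren π⁻¹ (ren π U) = ren π⁻¹ (GTerm.var G.sig n) := by rw [hU]
          rwa [ren_ren, ren_var] at this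
        obtain ⟨T', hT', hmem⟩ := h2 (Sum.inr (π⁻¹ n)) U ⟨hUv, hUv⟩
        obtain ⟨hTv, hT'v⟩ := hT'
        have hrT : ren π T = GTerm.var G.sig n := by
          rw [hTv, ren_var]; simp
        refine ⟨GTerm.var G.sig n, ⟨hrT, rfl⟩, ?_⟩
        have := ih _ _ hmem
        rw [hUv, hT'v, ren_var] at this
        simp only [Equiv.Perm.inv_def, Equiv.apply_symm_apply] at this
        rw [hYv]
        exact this

theorem simN_ren_iff (G : FOGrammar) (π : Equiv.Perm ℕ) (k : ℕ) (T U : GTerm G.sig) :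
    (T, U) ∈ (LTSact G).simN k ↔ (ren π T, ren π U) ∈ (LTSact G).simN k := by
  constructor
  · exact simN_ren G π k T U
  · intro h
    have := simN_ren G π⁻¹ k _ _ h
    rwa [ren_ren, ren_ren] at this


/-! ### Subterms and renaming -/

theorem childRel_ren {S : GrammarSig} (π : Equiv.Perm ℕ) {T T' : GTerm S}
    (h : childRel S T T') : childRel S (ren π T) (ren π T') := by
  obtain ⟨A, c, rfl, i, rfl⟩ := h
  exact ⟨A, fun j => ren π (c j), ren_app π A c, i, rfl⟩

theorem subterm_ren {S : GrammarSig} (π : Equiv.Perm ℕ) {U T : GTerm S}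
    (h : SubtermOf S U T) : SubtermOf S (ren π U) (ren π T) :=
  Relation.ReflTransGen.lift (ren π) (fun _ _ hab => childRel_ren π hab) _ _ h

theorem childRel_ren_back {S : GrammarSig} (π : Equiv.Perm ℕ) {T Y : GTerm S}
    (h : childRel S (ren π T) Y) : ∃ Y', childRel S T Y' ∧ Y = ren π Y' := by
  obtain ⟨A, c', heq, i, rfl⟩ := h
  rcases gterm_cases T with ⟨n, rfl⟩ | ⟨B, d, rfl⟩
  · rw [ren_var] at heq
    exact absurd heq (var_ne_app _ _ _)
  · rw [ren_app] at heq
    obtain ⟨hAB, hcd⟩ := app_inj heq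
    subst hAB
    have hc : (fun i => ren π (d i)) = c' := eq_of_heq hcd
    exact ⟨d i, ⟨B, d, rfl, i, rfl⟩, by rw [← hc]⟩

theorem subterm_ren_back_aux {S : GrammarSig} (π : Equiv.Perm ℕ) {U' Z : GTerm S}
    (h : Relation.ReflTransGen (childRel S) Z U') :
    ∀ T, Z = ren π T → ∃ U, SubtermOf S U T ∧ U' = ren π U := by
  induction h using Relation.ReflTransGen.head_induction_on with
  | refl => exact fun T hT => ⟨T, Relation.ReflTransGen.refl, hT⟩
  | head hstep _ ih =>
    intro T hT
    subst hT
    obtain ⟨Y', hc, rfl⟩ := childRel_ren_back π hstep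
    obtain ⟨U, hU, rfl⟩ := ih Y' rfl
    exact ⟨U, Relation.ReflTransGen.head hc hU, rfl⟩

theorem subterms_ren {S : GrammarSig} (π : Equiv.Perm ℕ) (T : GTerm S) :
    {U' | SubtermOf S U' (ren π T)} = ren π '' {U | SubtermOf S U T} := by
  ext U'
  constructor
  · intro h
    obtain ⟨U, hU, rfl⟩ := subterm_ren_back_aux π h T rfl
    exact ⟨U, hU, rfl⟩
  · rintro ⟨U, hU, rfl⟩
    exact subterm_ren π hU

theorem regular_ren {S : GrammarSig} (π : Equiv.Perm ℕ) {T : GTerm S}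
    (h : RegularT S T) : RegularT S (ren π T) := by
  unfold RegularT at h ⊢
  rw [subterms_ren]
  exact h.image _

theorem pressize_ren {S : GrammarSig} (π : Equiv.Perm ℕ) (T : GTerm S) :
    pressize S (ren π T) = pressize S T := by
  unfold pressize
  rw [subterms_ren]
  exact Set.ncard_image_of_injective _ (ren_inj π)

theorem varOccurs_ren {S : GrammarSig} (π : Equiv.Perm ℕ) {n : ℕ} {T : GTerm S}
    (h : VarOccurs S n (ren π T)) : ∃ m, VarOccurs S m T ∧ n = π m := by
  obtain ⟨U, hU, heq⟩ := subterm_ren_back_aux π h T rfl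
  rcases gterm_cases U with ⟨m, rfl⟩ | ⟨A, c, rfl⟩
  · rw [ren_var] at heq
    exact ⟨m, hU, var_inj heq⟩
  · rw [ren_app] at heq
    exact absurd heq (var_ne_app _ _ _)

/-! ### A permutation pushing a finite set of naturals below its cardinality -/

theorem exists_perm_lt_aux : ∀ (n : ℕ) (V : Finset ℕ), V.card = n →
    ∃ π : Equiv.Perm ℕ, ∀ v ∈ V, π v < n := by
  intro n
  induction n with
  | zero =>
    intro V hV
    refine ⟨1, fun v hv => absurd hv ?_⟩
    rw [Finset.card_eq_zero.mp hV]
    simp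
  | succ n ih =>
    intro V hV
    have hne : V.Nonempty := Finset.card_pos.mp (by omega)
    obtain ⟨v, hv⟩ := hne
    obtain ⟨π', hπ'⟩ := ih (V.erase v) (by rw [Finset.card_erase_of_mem hv, hV]; omega)
    refine ⟨π'.trans (Equiv.swap (π' v) n), fun w hw => ?_⟩
    simp only [Equiv.trans_apply]
    by_cases hwv : w = v
    · subst hwv
      rw [Equiv.swap_apply_left]
      omega
    · have hw' : w ∈ V.erase v := Finset.mem_erase.mpr ⟨hwv, hw⟩
      have h1 := hπ' w hw'
      rw [Equiv.swap_apply_of_ne_of_ne (π'.injective.ne hwv) (by omega)]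
      omega

theorem exists_perm_lt (V : Finset ℕ) : ∃ π : Equiv.Perm ℕ, ∀ v ∈ V, π v < V.card :=
  exists_perm_lt_aux V.card V rfl

/-! ### Finiteness of the set of bounded-size terms with bounded variables -/

/-- Finite "term systems" with at most `b+1` states. -/
def SysData (S : GrammarSig) (b : ℕ) :=
  Fin (b + 1) → ((Σ A : Fin S.ntCount, Fin (S.arity A) → Fin (b + 1)) ⊕ Fin (b + 1))

instance (S : GrammarSig) (b : ℕ) : Finite (SysData S b) := by
  unfold SysData
  infer_instance

/-- Unfolding a term system from a given state. -/
def sysUnfold {S : GrammarSig} {b : ℕ} (f : SysData S b) : Fin (b + 1) → GTerm S :=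
  PFunctor.M.corec (fun i =>
    match f i with
    | Sum.inl ⟨A, g⟩ => ⟨Sum.inl A, g⟩
    | Sum.inr v => ⟨Sum.inr v.val, fun e => e.elim⟩)

open Classical in
noncomputable def codeF {S : GrammarSig} (b : ℕ) (s : Finset (GTerm S))
    (hb : s.card ≤ b + 1) (e : {x // x ∈ s} ≃ Fin s.card) (U : GTerm S) : Fin (b + 1) :=
  if h : U ∈ s then Fin.castLE hb (e ⟨U, h⟩) else ⟨0, Nat.succ_pos b⟩

open Classical in
noncomputable def sysOf {S : GrammarSig} (b : ℕ) (s : Finset (GTerm S))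
    (hb : s.card ≤ b + 1) (e : {x // x ∈ s} ≃ Fin s.card) : SysData S b :=
  fun i =>
    if h : i.val < s.card then
      match PFunctor.M.dest (F := S.P) (e.symm ⟨i.val, h⟩).val with
      | ⟨Sum.inl A, c⟩ => Sum.inl ⟨A, fun j => codeF b s hb e (c j)⟩
      | ⟨Sum.inr n, _⟩ => Sum.inr (if hn : n < b + 1 then ⟨n, hn⟩ else ⟨0, Nat.succ_pos b⟩)
    else Sum.inr ⟨0, Nat.succ_pos b⟩

open Classical in
theorem codeF_eq {S : GrammarSig} {b : ℕ} {s : Finset (GTerm S)} {hb : s.card ≤ b + 1}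
    {e : {x // x ∈ s} ≃ Fin s.card} {U : GTerm S} (hU : U ∈ s) :
    codeF b s hb e U = Fin.castLE hb (e ⟨U, hU⟩) := by
  unfold codeF
  rw [dif_pos hU]

theorem codeF_lt {S : GrammarSig} {b : ℕ} {s : Finset (GTerm S)} {hb : s.card ≤ b + 1}
    {e : {x // x ∈ s} ≃ Fin s.card} {U : GTerm S} (hU : U ∈ s) :
    (codeF b s hb e U).val < s.card := by
  rw [codeF_eq hU]
  exact (e ⟨U, hU⟩).isLt

theorem codeF_symm {S : GrammarSig} {b : ℕ} {s : Finset (GTerm S)} {hb : s.card ≤ b + 1}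
    {e : {x // x ∈ s} ≃ Fin s.card} {U : GTerm S} (hU : U ∈ s) :
    (e.symm ⟨(codeF b s hb e U).val, codeF_lt hU⟩).val = U := by
  have h1 : (⟨(codeF b s hb e U).val, codeF_lt hU⟩ : Fin s.card) = e ⟨U, hU⟩ := by
    apply Fin.ext
    show (codeF b s hb e U).val = (e ⟨U, hU⟩).val
    rw [codeF_eq hU]
    rfl
  rw [h1, Equiv.symm_apply_apply]

theorem bounded_finite (S : GrammarSig) (b : ℕ) :
    {T : GTerm S | RegularT S T ∧ pressize S T ≤ b ∧ ∀ n, VarOccurs S n T → n < b}.Finite := by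
  classical
  apply Set.Finite.subset
    (Set.finite_range (fun sys : SysData S b × Fin (b + 1) => sysUnfold sys.1 sys.2))
  rintro T ⟨hreg, hsize, hvars⟩
  set s := hreg.toFinset with hs
  have hmem : ∀ U : GTerm S, U ∈ s ↔ SubtermOf S U T := fun U => hreg.mem_toFinset
  have hTs : T ∈ s := (hmem T).mpr Relation.ReflTransGen.refl
  have hcard : s.card ≤ b := by
    have h1 : pressize S T = s.card := Set.ncard_eq_toFinset_card _ hreg
    omega
  have hb1 : s.card ≤ b + 1 := le_trans hcard (Nat.le_succ b)
  let e : {x // x ∈ s} ≃ Fin s.card := (Fintype.equivFin _).trans (finCongr (Fintype.card_coe s))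
  refine ⟨(sysOf b s hb1 e, codeF b s hb1 e T), ?_⟩
  show sysUnfold (sysOf b s hb1 e) (codeF b s hb1 e T) = T
  apply PFunctor.M.bisim
    (fun x y => ∃ U, U ∈ s ∧ x = sysUnfold (sysOf b s hb1 e) (codeF b s hb1 e U) ∧ y = U)
  · rintro x y ⟨U, hU, hx, hy⟩
    subst hy
    subst hx
    rcases gterm_cases y with ⟨n, rfl⟩ | ⟨A, c, rfl⟩
    · -- variable case
      have hn : n < b := hvars n ((hmem _).mp hU)
      have hfi : sysOf b s hb1 e (codeF b s hb1 e (GTerm.var S n))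
          = Sum.inr ⟨n, lt_trans hn (Nat.lt_succ_self b)⟩ := by
        unfold sysOf
        rw [dif_pos (codeF_lt hU), codeF_symm hU, dest_var]
        show (Sum.inr (if hn : n < b + 1 then (⟨n, hn⟩ : Fin (b + 1)) else ⟨0, Nat.succ_pos b⟩)
          : (Σ A : Fin S.ntCount, Fin (S.arity A) → Fin (b + 1)) ⊕ Fin (b + 1)) = _
        rw [dif_pos (lt_trans hn (Nat.lt_succ_self b))]
      refine ⟨Sum.inr n, fun i => i.elim, fun i => i.elim, ?_, dest_var n, fun i => i.elim⟩
      unfold sysUnfold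
      rw [PFunctor.M.dest_corec]
      show S.P.map _ (match sysOf b s hb1 e (codeF b s hb1 e (GTerm.var S n)) with
        | Sum.inl ⟨A, g⟩ => ⟨Sum.inl A, g⟩
        | Sum.inr v => ⟨Sum.inr v.val, fun e => e.elim⟩) = _
      rw [hfi]
      exact congrArg (fun g => (⟨Sum.inr n, g⟩ : S.P.Obj _)) (funext fun i => i.elim)
    · -- application case
      have hfi : sysOf b s hb1 e (codeF b s hb1 e (GTerm.app A c))
          = Sum.inl ⟨A, fun j => codeF b s hb1 e (c j)⟩ := by
        unfold sysOf
        rw [dif_pos (codeF_lt hU), codeF_symm hU, dest_app]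
      have hchild : ∀ j, c j ∈ s := by
        intro j
        apply (hmem _).mpr
        exact Relation.ReflTransGen.tail ((hmem _).mp hU) ⟨A, c, rfl, j, rfl⟩
      refine ⟨Sum.inl A, fun j => sysUnfold (sysOf b s hb1 e) (codeF b s hb1 e (c j)), c,
        ?_, dest_app A c, fun j => ⟨c j, hchild j, rfl, rfl⟩⟩
      unfold sysUnfold
      rw [PFunctor.M.dest_corec]
      show S.P.map _ (match sysOf b s hb1 e (codeF b s hb1 e (GTerm.app A c)) with
        | Sum.inl ⟨A, g⟩ => ⟨Sum.inl A, g⟩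
        | Sum.inr v => ⟨Sum.inr v.val, fun e => e.elim⟩) = _
      rw [hfi]
      rfl
  · exact ⟨T, hTs, rfl, rfl⟩

end Aux2

end Aux

open Aux Aux.Aux2 in
/-- for every bound `b` there is `m ∈ ℕ` such that every pair `(E,F)` of
regular terms with `pressize(E) + pressize(F) ≤ b` and `E ≁ F` (in `L^act_G`)
satisfies `eqlevel(E,F) ≤ m`; i.e. `MaxEqLev(Size_{≤b} ∩ ≁)` is finite. -/
theorem bounded_size_nonbisim_eqlevel_bounded (G : FOGrammar) (b : ℕ) :
    ∃ m : ℕ, ∀ E F : GTerm G.sig,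
      RegularT G.sig E → RegularT G.sig F →
      pressize G.sig E + pressize G.sig F ≤ b →
      ¬ (LTSact G).Bisim E F →
      (LTSact G).eqlevel E F ≤ (m : ℕ∞) := by
  classical
  set Q : Set (GTerm G.sig) :=
    {T | RegularT G.sig T ∧ pressize G.sig T ≤ b ∧ ∀ n, VarOccurs G.sig n T → n < b} with hQdef
  have hQ : Q.Finite := Aux2.bounded_finite G.sig b
  have hP : (Q ×ˢ Q).Finite := hQ.prod hQ
  refine ⟨hP.toFinset.sup (fun p => ((LTSact G).eqlevel p.1 p.2).toNat), ?_⟩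
  intro E F hE hF hsize hnb
  set V : Set ℕ := {n | VarOccurs G.sig n E ∨ VarOccurs G.sig n F} with hVdef
  have hW : ({U | SubtermOf G.sig U E} ∪ {U | SubtermOf G.sig U F}).Finite := hE.union hF
  have hVeq : V = (fun n => GTerm.var G.sig n) ⁻¹'
      ({U | SubtermOf G.sig U E} ∪ {U | SubtermOf G.sig U F}) := rfl
  have hVfin : V.Finite := by
    rw [hVeq]
    exact hW.preimage (fun a _ c _ h => Aux.var_inj h)
  have hinj : Function.Injective (fun n => GTerm.var G.sig n) := fun n m h => Aux.var_inj h
  have hVcard : hVfin.toFinset.card ≤ b := by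
    have h1 : V.ncard = hVfin.toFinset.card := Set.ncard_eq_toFinset_card _ hVfin
    have h2 : V.ncard = ((fun n => GTerm.var G.sig n) '' V).ncard :=
      (Set.ncard_image_of_injective _ hinj).symm
    have h3 : ((fun n => GTerm.var G.sig n) '' V)
        ⊆ {U | SubtermOf G.sig U E} ∪ {U | SubtermOf G.sig U F} := by
      rintro _ ⟨n, hn, rfl⟩
      exact hn
    have h4 := Set.ncard_le_ncard h3 hW
    have h5 := Set.ncard_union_le {U | SubtermOf G.sig U E} {U | SubtermOf G.sig U F}
    have hpE : {U | SubtermOf G.sig U E}.ncard = pressize G.sig E := rfl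
    have hpF : {U | SubtermOf G.sig U F}.ncard = pressize G.sig F := rfl
    omega
  obtain ⟨π, hπ⟩ := Aux2.exists_perm_lt hVfin.toFinset
  have hπb : ∀ n, n ∈ V → π n < b := fun n hn =>
    lt_of_lt_of_le (hπ n (hVfin.mem_toFinset.mpr hn)) hVcard
  have hsE : pressize G.sig E ≤ b := le_trans (Nat.le_add_right _ _) hsize
  have hsF : pressize G.sig F ≤ b := le_trans (Nat.le_add_left _ _) hsize
  have hE'Q : Aux.ren π E ∈ Q := by
    refine ⟨Aux2.regular_ren π hE, ?_, ?_⟩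
    · rw [Aux2.pressize_ren]; exact hsE
    · intro n hn
      obtain ⟨m, hm, rfl⟩ := Aux2.varOccurs_ren π hn
      exact hπb m (Or.inl hm)
  have hF'Q : Aux.ren π F ∈ Q := by
    refine ⟨Aux2.regular_ren π hF, ?_, ?_⟩
    · rw [Aux2.pressize_ren]; exact hsF
    · intro n hn
      obtain ⟨m, hm, rfl⟩ := Aux2.varOccurs_ren π hn
      exact hπb m (Or.inr hm)
  have hPmem : (Aux.ren π E, Aux.ren π F) ∈ Q ×ˢ Q := ⟨hE'Q, hF'Q⟩
  have hiff : ∀ k : ℕ, ((E, F) ∈ (LTSact G).simN k ↔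
      (Aux.ren π E, Aux.ren π F) ∈ (LTSact G).simN k) := fun k =>
    Aux2.simN_ren_iff G π k E F
  have heq : (LTSact G).eqlevel E F = (LTSact G).eqlevel (Aux.ren π E) (Aux.ren π F) :=
    eqlevel_le_iff_mem _ hiff
  obtain ⟨k, hk⟩ := not_bisim_exists_k (LTSact G) (Aux2.imageFinite_LTSact G) hnb
  have hk' : (Aux.ren π E, Aux.ren π F) ∉ (LTSact G).simN k := fun hc => hk ((hiff k).mpr hc)
  have hfin : (LTSact G).eqlevel (Aux.ren π E) (Aux.ren π F) ≤ (k : ℕ∞) :=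
    eqlevel_le_of_not_simN _ hk'
  have hne : (LTSact G).eqlevel (Aux.ren π E) (Aux.ren π F) ≠ ⊤ := by
    intro h
    rw [h] at hfin
    exact absurd hfin (by simp)
  rw [heq]
  have hle := Finset.le_sup (f := fun p : GTerm G.sig × GTerm G.sig =>
    ((LTSact G).eqlevel p.1 p.2).toNat) (hP.mem_toFinset.mpr hPmem)
  calc (LTSact G).eqlevel (Aux.ren π E) (Aux.ren π F)
      = (((LTSact G).eqlevel (Aux.ren π E) (Aux.ren π F)).toNat : ℕ∞) :=
        (ENat.coe_toNat hne).symm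
    _ ≤ _ := by exact_mod_cast hle
end
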